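/- arXiv:2604.01047 — 7 statements merged into one kernel-verified Lean document; each statement's English description precedes it below -/
import Mathlib

section
/- Let m > 0, let ς : ℝ → ℝ be measurable with ς(M) > 0 for all M ≥ 4m² and ς square-integrable on [4m², ∞), and let c ∈ ℝ with 1 < c < 4m². Then: (i) for every w ≥ 0 the function M ↦ ς(M)·(w + c)/(w + M) is integrable on [4m², ∞); (ii) the function F : [0, ∞) → ℝ defined by F(w) := ∫_{4m²}^∞ ς(M)·(w + c)/(w + M) dM satisfies F(w) > 0 for every w ≥ 0; and (iii) F is strictly monotonically increasing on [0, ∞). -/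
open MeasureTheory Set

lemma aux_memLp (a c w : ℝ) (ha : 0 < a) (hw : 0 ≤ w) (hc : 0 < c) :
    MemLp (fun M : ℝ => (w + c) / (w + M)) 2 (volume.restrict (Set.Ici a)) := by
  have hmeas : AEStronglyMeasurable (fun M : ℝ => (w + c) / (w + M))
      (volume.restrict (Set.Ici a)) :=
    (measurable_const.div (measurable_const.add measurable_id)).aestronglyMeasurable
  rw [memLp_two_iff_integrable_sq hmeas]
  have hbase : IntegrableOn (fun M : ℝ => (w + c) ^ 2 * M ^ (-2 : ℝ)) (Set.Ici a) := by
    rw [integrableOn_Ici_iff_integrableOn_Ioi]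
    exact (integrableOn_Ioi_rpow_of_lt (by norm_num) ha).const_mul _
  refine Integrable.mono hbase
    (((measurable_const.div (measurable_const.add measurable_id)).pow_const 2).aestronglyMeasurable) ?_
  filter_upwards [ae_restrict_mem measurableSet_Ici] with M hM
  have hM' : a ≤ M := hM
  have hMpos : 0 < M := lt_of_lt_of_le ha hM'
  have hwM : 0 < w + M := by linarith
  have h0 : 0 ≤ (w + c) / (w + M) := by positivity
  have h1 : (w + c) / (w + M) ≤ (w + c) * M⁻¹ := by
    rw [div_eq_mul_inv]
    exact mul_le_mul_of_nonneg_left (inv_anti₀ hMpos (by linarith)) (by positivity)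
  rw [Real.norm_eq_abs, Real.norm_eq_abs, abs_of_nonneg (by positivity),
    abs_of_nonneg (by positivity : (0:ℝ) ≤ (w + c) ^ 2 * M ^ (-2 : ℝ)),
    Real.rpow_neg hMpos.le, Real.rpow_two]
  calc ((w + c) / (w + M)) ^ 2 ≤ ((w + c) * M⁻¹) ^ 2 := by
        have h2 : 0 ≤ (w + c) * M⁻¹ := by positivity
        nlinarith
    _ = (w + c) ^ 2 * (M ^ 2)⁻¹ := by rw [mul_pow, inv_pow]

theorem stmt_0 (m : ℝ) (hm : 0 < m) (ς : ℝ → ℝ) (hmeas : Measurable ς)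
    (hpos : ∀ M : ℝ, 4 * m ^ 2 ≤ M → 0 < ς M)
    (hL2 : MemLp ς 2 (volume.restrict (Set.Ici (4 * m ^ 2))))
    (c : ℝ) (hc1 : 1 < c) (hc2 : c < 4 * m ^ 2) :
    (∀ w : ℝ, 0 ≤ w →
      IntegrableOn (fun M : ℝ => ς M * (w + c) / (w + M)) (Set.Ici (4 * m ^ 2))) ∧
    (∀ w : ℝ, 0 ≤ w →
      0 < ∫ M in Set.Ici (4 * m ^ 2), ς M * (w + c) / (w + M)) ∧
    StrictMonoOn (fun w : ℝ => ∫ M in Set.Ici (4 * m ^ 2), ς M * (w + c) / (w + M))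
      (Set.Ici (0 : ℝ)) := by
  set a := 4 * m ^ 2 with ha_def
  have ha : 0 < a := by positivity
  have hc0 : 0 < c := lt_trans one_pos hc1
  have hint : ∀ w : ℝ, 0 ≤ w →
      IntegrableOn (fun M : ℝ => ς M * (w + c) / (w + M)) (Set.Ici a) := by
    intro w hw
    have h2 := aux_memLp a c w ha hw hc0
    have hi : Integrable ((fun M : ℝ => (w + c) / (w + M)) • ς)
        (volume.restrict (Set.Ici a)) :=
      memLp_one_iff_integrable.mp (hL2.smul h2 (hpqr := ⟨by simp [one_div, ENNReal.inv_two_add_inv_two]⟩))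
    exact hi.congr (Filter.Eventually.of_forall fun M => by
      simp only [Pi.smul_apply, smul_eq_mul, Pi.mul_apply]; ring)
  have hposint : ∀ w : ℝ, 0 ≤ w →
      0 < ∫ M in Set.Ici a, ς M * (w + c) / (w + M) := by
    intro w hw
    have hnn : 0 ≤ᵐ[volume.restrict (Set.Ici a)]
        (fun M : ℝ => ς M * (w + c) / (w + M)) := by
      filter_upwards [ae_restrict_mem measurableSet_Ici] with M hM
      have hM' : a ≤ M := hM
      have h1 := hpos M hM'
      have h2 : 0 < w + M := by linarith
      positivity
    rw [setIntegral_pos_iff_support_of_nonneg_ae hnn (hint w hw)]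
    have hsub : Set.Ici a ⊆ Function.support (fun M : ℝ => ς M * (w + c) / (w + M)) ∩ Set.Ici a := by
      intro M hM
      refine ⟨?_, hM⟩
      have hM' : a ≤ M := hM
      have h1 := hpos M hM'
      have h2 : 0 < w + M := by linarith
      have : 0 < ς M * (w + c) / (w + M) := by positivity
      exact ne_of_gt this
    calc (0 : ENNReal) < volume (Set.Ici a) := by simp [Real.volume_Ici]
      _ ≤ _ := measure_mono hsub
  refine ⟨hint, hposint, ?_⟩
  intro w₁ hw₁ w₂ hw₂ hlt
  have hw₁' : 0 ≤ w₁ := hw₁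
  have hw₂' : 0 ≤ w₂ := hw₂
  have h1 := hint w₁ hw₁'
  have h2 := hint w₂ hw₂'
  show (∫ M in Set.Ici a, ς M * (w₁ + c) / (w₁ + M)) <
    ∫ M in Set.Ici a, ς M * (w₂ + c) / (w₂ + M)
  have key : ∀ M : ℝ, a ≤ M →
      ς M * (w₁ + c) / (w₁ + M) < ς M * (w₂ + c) / (w₂ + M) := by
    intro M hM
    have hs := hpos M hM
    have hd1 : 0 < w₁ + M := by linarith
    have hd2 : 0 < w₂ + M := by linarith
    have hk : (w₁ + c) / (w₁ + M) < (w₂ + c) / (w₂ + M) := by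
      rw [div_lt_div_iff₀ hd1 hd2]
      nlinarith
    have := mul_lt_mul_of_pos_left hk hs
    rw [mul_div_assoc, mul_div_assoc]
    linarith
  have hdiffpos : 0 < ∫ M in Set.Ici a,
      (ς M * (w₂ + c) / (w₂ + M) - ς M * (w₁ + c) / (w₁ + M)) := by
    have hnn : 0 ≤ᵐ[volume.restrict (Set.Ici a)]
        (fun M : ℝ => ς M * (w₂ + c) / (w₂ + M) - ς M * (w₁ + c) / (w₁ + M)) := by
      filter_upwards [ae_restrict_mem measurableSet_Ici] with M hM
      have := key M hM
      simp only [Pi.zero_apply]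
      linarith
    rw [setIntegral_pos_iff_support_of_nonneg_ae hnn (h2.sub h1)]
    have hsub : Set.Ici a ⊆ Function.support
        (fun M : ℝ => ς M * (w₂ + c) / (w₂ + M) - ς M * (w₁ + c) / (w₁ + M)) ∩ Set.Ici a := by
      intro M hM
      refine ⟨?_, hM⟩
      have hM' : a ≤ M := hM
      have := key M hM'
      simp only [Function.mem_support]
      intro h
      have := sub_eq_zero.mp h
      linarith
    calc (0 : ENNReal) < volume (Set.Ici a) := by simp [Real.volume_Ici]
      _ ≤ _ := measure_mono hsub
  have hsplit : (∫ M in Set.Ici a,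
      (ς M * (w₂ + c) / (w₂ + M) - ς M * (w₁ + c) / (w₁ + M))) =
      (∫ M in Set.Ici a, ς M * (w₂ + c) / (w₂ + M)) -
      ∫ M in Set.Ici a, ς M * (w₁ + c) / (w₁ + M) := integral_sub h2 h1
  linarith [hsplit ▸ hdiffpos]
end

section
/- Let m > 0. For every real z with 0 < z < 4m², the function M ↦ ρ(M)/(M − z) is integrable on [4m², ∞) and ∫_{4m²}^∞ ρ(M)/(M − z) dM = (1/(8π²))·( 1/z − √(4m² − z)·arcsin(√z/(2m)) / z^{3/2} ). -/
open MeasureTheory Set Real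

/-- The spectral density `ρ(M) = (1/(16π²M))·√(1 − 4m²/M)` for `M ≥ 4m²`, and `0` otherwise. -/
noncomputable def rho (m M : ℝ) : ℝ :=
  if 4 * m ^ 2 ≤ M then (1 / (16 * Real.pi ^ 2 * M)) * Real.sqrt (1 - 4 * m ^ 2 / M) else 0

lemma aux_deriv (m z M : ℝ) (hm : 0 < m) (hz0 : 0 < z) (hz : z < 4 * m ^ 2)
    (hM : 4 * m ^ 2 < M) :
    HasDerivAt (fun x => (1 / (8 * Real.pi ^ 2 * z)) *
        (Real.sqrt (1 - 4 * m ^ 2 / x) -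
          Real.sqrt ((4 * m ^ 2 - z) / z) *
            Real.arctan (Real.sqrt (z / (4 * m ^ 2 - z)) * Real.sqrt (1 - 4 * m ^ 2 / x))))
      (rho m M / (M - z)) M := by
  have ha : (0:ℝ) < 4 * m ^ 2 := by positivity
  have hM0 : 0 < M := ha.trans hM
  have htpos : 0 < 1 - 4 * m ^ 2 / M := by
    rw [sub_pos]; exact (div_lt_one hM0).2 hM
  set s := Real.sqrt (1 - 4 * m ^ 2 / M) with hs_def
  have hspos : 0 < s := Real.sqrt_pos.2 htpos
  have hs2 : s ^ 2 = 1 - 4 * m ^ 2 / M := Real.sq_sqrt htpos.le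
  have haz : 0 < 4 * m ^ 2 - z := by linarith
  set c := Real.sqrt ((4 * m ^ 2 - z) / z) with hc_def
  set d := Real.sqrt (z / (4 * m ^ 2 - z)) with hd_def
  have hcd : c * d = 1 := by
    rw [hc_def, hd_def, ← Real.sqrt_mul (by positivity)]
    rw [show (4 * m ^ 2 - z) / z * (z / (4 * m ^ 2 - z)) = 1 by field_simp]
    exact Real.sqrt_one
  have hd2 : d ^ 2 = z / (4 * m ^ 2 - z) := Real.sq_sqrt (by positivity)
  -- derivative of inner function
  have h1 : HasDerivAt (fun x : ℝ => 1 - 4 * m ^ 2 / x) (4 * m ^ 2 / M ^ 2) M := by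
    have := ((hasDerivAt_inv hM0.ne').const_mul (4 * m ^ 2)).const_sub 1
    simp only [← div_eq_mul_inv] at this
    exact this.congr_deriv (by field_simp)
  have hsd : HasDerivAt (fun x : ℝ => Real.sqrt (1 - 4 * m ^ 2 / x))
      ((4 * m ^ 2 / M ^ 2) / (2 * s)) M := h1.sqrt htpos.ne'
  have harc : HasDerivAt (fun x : ℝ =>
      Real.arctan (d * Real.sqrt (1 - 4 * m ^ 2 / x)))
      (1 / (1 + (d * s) ^ 2) * (d * ((4 * m ^ 2 / M ^ 2) / (2 * s)))) M :=
    (hsd.const_mul d).arctan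
  have hfull := (hsd.sub (harc.const_mul c)).const_mul (1 / (8 * Real.pi ^ 2 * z))
  refine hfull.congr_deriv ?_
  symm
  rw [rho, if_pos hM.le]
  have hpi : Real.pi ≠ 0 := Real.pi_ne_zero
  have hMz : M - z ≠ 0 := by intro h; nlinarith
  -- simplify c * (1/(1+(d*s)^2) * (d * t'))
  have hds2 : (d * s) ^ 2 = z * (1 - 4 * m ^ 2 / M) / (4 * m ^ 2 - z) := by
    rw [mul_pow, hd2, hs2]; ring
  have key : c * (1 / (1 + (d * s) ^ 2) * (d * ((4 * m ^ 2 / M ^ 2) / (2 * s)))) =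
      1 / (1 + (d * s) ^ 2) * ((4 * m ^ 2 / M ^ 2) / (2 * s)) := by
    field_simp
    nlinarith [hcd, sq_nonneg (d*s)]
  have hB : 1 + (d * s) ^ 2 = 4 * m ^ 2 * (M - z) / ((4 * m ^ 2 - z) * M) := by
    rw [hds2]; field_simp; ring
  rw [key, hB, ← hs_def]
  have hMs : M * s ^ 2 = M - 4 * m ^ 2 := by
    rw [hs2]; field_simp
  clear_value s c d
  field_simp
  linear_combination (16 * z) * hMs

lemma aux_sqrt_eq (m z : ℝ) (hm : 0 < m) (hz0 : 0 < z) (hz : z < 4 * m ^ 2) :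
    Real.arcsin (Real.sqrt z / (2 * m)) = Real.arctan (Real.sqrt (z / (4 * m ^ 2 - z))) := by
  have haz : (0:ℝ) < 4 * m ^ 2 - z := by linarith
  have h2m : Real.sqrt z < 2 * m := by
    have : Real.sqrt z < Real.sqrt (4 * m ^ 2) := Real.sqrt_lt_sqrt hz0.le hz
    rwa [show 4 * m ^ 2 = (2*m)^2 by ring, Real.sqrt_sq (by positivity)] at this
  have hmem : Real.sqrt z / (2 * m) ∈ Ioo (-1 : ℝ) 1 := by
    constructor
    · have : (0:ℝ) ≤ Real.sqrt z / (2*m) := by positivity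
      linarith
    · rw [div_lt_one (by positivity)]; exact h2m
  rw [Real.arcsin_eq_arctan hmem]
  congr 1
  have h1 : 1 - (Real.sqrt z / (2 * m)) ^ 2 = (4 * m ^ 2 - z) / (4 * m ^ 2) := by
    rw [div_pow, Real.sq_sqrt hz0.le]
    field_simp
    ring
  have h4 : Real.sqrt (4 * m ^ 2) = 2 * m := by
    rw [show (4 * m ^ 2 : ℝ) = (2 * m) ^ 2 by ring, Real.sqrt_sq (by positivity)]
  have hs4 : Real.sqrt (4 * m ^ 2 - z) ≠ 0 := by positivity
  rw [h1, Real.sqrt_div haz.le, h4, Real.sqrt_div hz0.le]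
  field_simp

theorem stmt_2 (m : ℝ) (hm : 0 < m) (z : ℝ) (hz0 : 0 < z) (hz : z < 4 * m ^ 2) :
    IntegrableOn (fun M : ℝ => rho m M / (M - z)) (Set.Ici (4 * m ^ 2)) ∧
    ∫ M in Set.Ici (4 * m ^ 2), rho m M / (M - z) =
      (1 / (8 * Real.pi ^ 2)) *
        (1 / z -
          Real.sqrt (4 * m ^ 2 - z) * Real.arcsin (Real.sqrt z / (2 * m)) /
            z ^ ((3 : ℝ) / 2)) := by
  have ha : (0:ℝ) < 4 * m ^ 2 := by positivity
  have haz : (0:ℝ) < 4 * m ^ 2 - z := by linarith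
  set g : ℝ → ℝ := fun x => (1 / (8 * Real.pi ^ 2 * z)) *
      (Real.sqrt (1 - 4 * m ^ 2 / x) -
        Real.sqrt ((4 * m ^ 2 - z) / z) *
          Real.arctan (Real.sqrt (z / (4 * m ^ 2 - z)) * Real.sqrt (1 - 4 * m ^ 2 / x))) with hg
  have hderiv : ∀ x ∈ Ioi (4 * m ^ 2), HasDerivAt g (rho m x / (x - z)) x :=
    fun x hx => aux_deriv m z x hm hz0 hz hx
  have hcont : ContinuousWithinAt g (Ici (4 * m ^ 2)) (4 * m ^ 2) := by
    apply ContinuousAt.continuousWithinAt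
    have h1 : ContinuousAt (fun x : ℝ => 1 - 4 * m ^ 2 / x) (4 * m ^ 2) :=
      continuousAt_const.sub (continuousAt_const.div continuousAt_id ha.ne')
    have h2 : ContinuousAt (fun x : ℝ => Real.sqrt (1 - 4 * m ^ 2 / x)) (4 * m ^ 2) :=
      Real.continuous_sqrt.continuousAt.comp h1
    exact continuousAt_const.mul (h2.sub (continuousAt_const.mul
      (Real.continuous_arctan.continuousAt.comp (continuousAt_const.mul h2))))
  have hnonneg : ∀ x ∈ Ioi (4 * m ^ 2), 0 ≤ rho m x / (x - z) := by
    intro x hx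
    have hx' : 4 * m ^ 2 < x := hx
    have hx0 : 0 < x := ha.trans hx'
    have hr : 0 ≤ rho m x := by
      rw [rho, if_pos hx'.le]
      positivity
    exact div_nonneg hr (by linarith)
  have h1 : Filter.Tendsto (fun x : ℝ => 1 - 4 * m ^ 2 / x) Filter.atTop (nhds 1) := by
    have h0 := tendsto_inv_atTop_zero.const_mul (4 * m ^ 2)
    rw [mul_zero] at h0
    have := h0.const_sub 1
    simpa [div_eq_mul_inv] using this
  have h2 : Filter.Tendsto (fun x : ℝ => Real.sqrt (1 - 4 * m ^ 2 / x)) Filter.atTop (nhds 1) := by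
    have := (Real.continuous_sqrt.tendsto 1).comp h1
    simpa [Function.comp_def] using this
  have h3 : Filter.Tendsto (fun x : ℝ =>
      Real.arctan (Real.sqrt (z / (4 * m ^ 2 - z)) * Real.sqrt (1 - 4 * m ^ 2 / x)))
      Filter.atTop (nhds (Real.arctan (Real.sqrt (z / (4 * m ^ 2 - z))))) := by
    have := (Real.continuous_arctan.tendsto _).comp (h2.const_mul (Real.sqrt (z / (4 * m ^ 2 - z))))
    simpa [Function.comp_def] using this
  have htend : Filter.Tendsto g Filter.atTop (nhds ((1 / (8 * Real.pi ^ 2 * z)) *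
      (1 - Real.sqrt ((4 * m ^ 2 - z) / z) * Real.arctan (Real.sqrt (z / (4 * m ^ 2 - z)))))) :=
    (h2.sub (h3.const_mul _)).const_mul _
  have hint := integrableOn_Ioi_deriv_of_nonneg hcont hderiv hnonneg htend
  have hval := integral_Ioi_of_hasDerivAt_of_nonneg hcont hderiv hnonneg htend
  refine ⟨(integrableOn_Ici_iff_integrableOn_Ioi (by simp)).2 hint, ?_⟩
  rw [MeasureTheory.integral_Ici_eq_integral_Ioi, hval]
  have hg0 : g (4 * m ^ 2) = 0 := by
    rw [hg]
    simp only
    rw [div_self ha.ne', sub_self, Real.sqrt_zero, mul_zero, Real.arctan_zero, mul_zero,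
      sub_zero, mul_zero]
  rw [hg0, sub_zero, aux_sqrt_eq m z hm hz0 hz]
  have hz32 : z ^ ((3:ℝ)/2) = z * Real.sqrt z := by
    rw [show (3:ℝ)/2 = 1 + 1/2 by norm_num, Real.rpow_add hz0, Real.rpow_one,
      ← Real.sqrt_eq_rpow]
  rw [hz32, Real.sqrt_div haz.le]
  have hsz : Real.sqrt z ≠ 0 := by positivity
  have hpi : Real.pi ≠ 0 := Real.pi_ne_zero
  field_simp
end

section
/- Let m > 0. For every real w > 0, the function M ↦ ρ(M)/(w² + M) is integrable on [4m², ∞) and ∫_{4m²}^∞ ρ(M)/(w² + M) dM = (1/(16π²))·( (2m/w³)·√(4 + w²/m²)·log( w/(2m) + √(1 + w²/(4m²)) ) − 2/w² ). -/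
open MeasureTheory Set Real

private lemma image_phi (a : ℝ) (ha : 0 < a) :
    (fun u : ℝ => a / (1 - u ^ 2)) '' Set.Ioo 0 1 = Set.Ioi a := by
  ext M
  simp only [Set.mem_image, Set.mem_Ioo, Set.mem_Ioi]
  constructor
  · rintro ⟨u, ⟨hu0, hu1⟩, rfl⟩
    have h1 : 0 < 1 - u ^ 2 := by nlinarith
    rw [lt_div_iff₀ h1]
    nlinarith [mul_pos ha (mul_pos hu0 hu0)]
  · intro hM
    have hM0 : 0 < M := ha.trans hM
    have hlt : a / M < 1 := (div_lt_one hM0).mpr hM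
    have hpos : 0 < a / M := div_pos ha hM0
    have hge : 0 ≤ 1 - a / M := by linarith
    refine ⟨Real.sqrt (1 - a / M), ⟨Real.sqrt_pos.mpr (by linarith), ?_⟩, ?_⟩
    · have h := Real.sqrt_lt_sqrt hge (by linarith : 1 - a / M < 1)
      simpa using h
    · rw [Real.sq_sqrt hge, sub_sub_cancel]
      field_simp

private lemma injOn_phi (a : ℝ) (ha : 0 < a) :
    Set.InjOn (fun u : ℝ => a / (1 - u ^ 2)) (Set.Ioo 0 1) := by
  intro u hu v hv h
  have h1 : (0:ℝ) < 1 - u ^ 2 := by nlinarith [hu.1, hu.2]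
  have h2 : (0:ℝ) < 1 - v ^ 2 := by nlinarith [hv.1, hv.2]
  simp only at h
  rw [div_eq_div_iff h1.ne' h2.ne'] at h
  have h3 : (u - v) * (u + v) = 0 := by nlinarith
  rcases mul_eq_zero.mp h3 with h4 | h4
  · linarith
  · linarith [hu.1, hv.1]

private lemma hasDeriv_phi (a u : ℝ) (h1 : (0:ℝ) < 1 - u ^ 2) :
    HasDerivAt (fun u : ℝ => a / (1 - u ^ 2)) (2 * a * u / (1 - u ^ 2) ^ 2) u := by
  have hden : HasDerivAt (fun u : ℝ => 1 - u ^ 2) (-(2 * u)) u := by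
    simpa using ((hasDerivAt_pow 2 u).const_sub 1)
  have hd : HasDerivAt (fun u : ℝ => a / (1 - u ^ 2)) _ u := (hasDerivAt_const u a).div hden h1.ne'
  convert hd using 1
  ring

private lemma cont_c (c : ℝ) (hc : 1 < c) :
    ContinuousOn (fun u : ℝ => 2 * u ^ 2 / (c ^ 2 - u ^ 2)) (Set.Icc 0 1) := by
  apply ContinuousOn.div
  · exact (continuous_const.mul (continuous_pow 2)).continuousOn
  · exact ((continuous_const.pow 2).sub (continuous_pow 2)).continuousOn
  · intro x hx
    have hx2 : x ^ 2 ≤ 1 := by nlinarith [hx.1, hx.2]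
    nlinarith

private lemma ftc_c (c : ℝ) (hc : 1 < c) :
    ∫ u in Set.Ioo (0:ℝ) 1, 2 * u ^ 2 / (c ^ 2 - u ^ 2)
      = c * (Real.log (c + 1) - Real.log (c - 1)) - 2 := by
  have hF : ∀ u ∈ Set.uIcc (0:ℝ) 1,
      HasDerivAt (fun u : ℝ => c * (Real.log (c + u) - Real.log (c - u)) - 2 * u)
        (2 * u ^ 2 / (c ^ 2 - u ^ 2)) u := by
    intro u hu
    rw [Set.uIcc_of_le zero_le_one] at hu
    have h0 : 0 < c + u := by linarith [hu.1]
    have h1 : 0 < c - u := by linarith [hu.2]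
    have hd1 : HasDerivAt (fun y : ℝ => Real.log (c + y)) (1 / (c + u)) u := by
      simpa using (((hasDerivAt_id u).const_add c).log h0.ne')
    have hd2 : HasDerivAt (fun y : ℝ => Real.log (c - y)) (-1 / (c - u)) u := by
      simpa using (((hasDerivAt_id u).const_sub c).log h1.ne')
    have hcomb : HasDerivAt (fun u : ℝ => c * (Real.log (c + u) - Real.log (c - u)) - 2 * u) _ u :=
      ((hd1.sub hd2).const_mul c).sub ((hasDerivAt_id u).const_mul 2)
    convert hcomb using 1
    have hne : c ^ 2 - u ^ 2 ≠ 0 := by nlinarith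
    field_simp
    ring
  have hint : IntervalIntegrable (fun u : ℝ => 2 * u ^ 2 / (c ^ 2 - u ^ 2)) volume 0 1 := by
    apply ContinuousOn.intervalIntegrable
    rw [Set.uIcc_of_le zero_le_one]
    exact cont_c c hc
  have hFTC := intervalIntegral.integral_eq_sub_of_hasDerivAt hF hint
  rw [← MeasureTheory.integral_Ioc_eq_integral_Ioo, ← intervalIntegral.integral_of_le zero_le_one,
    hFTC]
  simp

theorem stmt_3 (m : ℝ) (hm : 0 < m) (w : ℝ) (hw : 0 < w) :
    IntegrableOn (fun M : ℝ => rho m M / (w ^ 2 + M)) (Set.Ici (4 * m ^ 2)) ∧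
    ∫ M in Set.Ici (4 * m ^ 2), rho m M / (w ^ 2 + M) =
      (1 / (16 * Real.pi ^ 2)) *
        ((2 * m / w ^ 3) * Real.sqrt (4 + w ^ 2 / m ^ 2) *
            Real.log (w / (2 * m) + Real.sqrt (1 + w ^ 2 / (4 * m ^ 2))) -
          2 / w ^ 2) := by
  have hπ : Real.pi ≠ 0 := Real.pi_ne_zero
  set a : ℝ := 4 * m ^ 2 with ha_def
  have ha : 0 < a := by positivity
  set s : ℝ := Real.sqrt (w ^ 2 + a) with hs_def
  have hs2 : s ^ 2 = w ^ 2 + a := Real.sq_sqrt (by positivity)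
  have hws : w < s := by
    by_contra h
    push_neg at h
    have hs0 : 0 ≤ s := Real.sqrt_nonneg _
    nlinarith
  have hs0 : 0 < s := hw.trans hws
  have hc1 : 1 < s / w := (one_lt_div hw).mpr hws
  have hmeas : MeasurableSet (Set.Ioo (0:ℝ) 1) := measurableSet_Ioo
  have hderiv : ∀ u ∈ Set.Ioo (0:ℝ) 1,
      HasDerivWithinAt (fun u : ℝ => a / (1 - u ^ 2)) (2 * a * u / (1 - u ^ 2) ^ 2)
        (Set.Ioo 0 1) u := by
    intro u hu
    have h1 : (0:ℝ) < 1 - u ^ 2 := by nlinarith [hu.1, hu.2]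
    exact (hasDeriv_phi a u h1).hasDerivWithinAt
  have hinj := injOn_phi a ha
  have himage := image_phi a ha
  -- key pointwise identity
  have hkey : ∀ u ∈ Set.Ioo (0:ℝ) 1,
      |2 * a * u / (1 - u ^ 2) ^ 2| •
        (Real.sqrt (1 - a / (a / (1 - u ^ 2))) /
          ((a / (1 - u ^ 2)) * (w ^ 2 + a / (1 - u ^ 2))))
        = 2 * u ^ 2 / (s ^ 2 - w ^ 2 * u ^ 2) := by
    intro u hu
    have h1 : (0:ℝ) < 1 - u ^ 2 := by nlinarith [hu.1, hu.2]
    have hsub : 1 - a / (a / (1 - u ^ 2)) = u ^ 2 := by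
      rw [div_div_eq_mul_div, mul_comm, mul_div_assoc, div_self ha.ne', mul_one]
      ring
    have hd : 0 < w ^ 2 + a - w ^ 2 * u ^ 2 := by nlinarith [hu.1, hu.2, sq_nonneg w]
    have hpos : 0 < 2 * a * u / (1 - u ^ 2) ^ 2 :=
      div_pos (by nlinarith [hu.1]) (by positivity)
    rw [hsub, Real.sqrt_sq hu.1.le, abs_of_pos hpos, smul_eq_mul, hs2]
    rw [div_mul_div_comm]
    rw [div_eq_div_iff (by positivity) hd.ne']
    field_simp
    ring
  -- continuity / integrability of the substituted integrand
  have hcont : ContinuousOn (fun u : ℝ => 2 * u ^ 2 / (s ^ 2 - w ^ 2 * u ^ 2))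
      (Set.Icc (0:ℝ) 1) := by
    apply ContinuousOn.div
    · exact (continuous_const.mul (continuous_pow 2)).continuousOn
    · exact (continuous_const.sub (continuous_const.mul (continuous_pow 2))).continuousOn
    · intro x hx
      have hx2 : x ^ 2 ≤ 1 := by nlinarith [hx.1, hx.2]
      nlinarith [sq_nonneg w]
  have hψint : IntegrableOn (fun u : ℝ => 2 * u ^ 2 / (s ^ 2 - w ^ 2 * u ^ 2))
      (Set.Ioo (0:ℝ) 1) := hcont.integrableOn_Icc.mono_set Set.Ioo_subset_Icc_self
  -- value of the substituted integral
  have hpt : ∀ u : ℝ, 2 * u ^ 2 / (s ^ 2 - w ^ 2 * u ^ 2)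
      = 1 / w ^ 2 * (2 * u ^ 2 / ((s / w) ^ 2 - u ^ 2)) := by
    intro u
    rw [div_mul_div_comm, one_mul]
    congr 1
    field_simp
  have hIoo : ∫ u in Set.Ioo (0:ℝ) 1, 2 * u ^ 2 / (s ^ 2 - w ^ 2 * u ^ 2)
      = 1 / w ^ 2 * ((s / w) * (Real.log (s / w + 1) - Real.log (s / w - 1)) - 2) := by
    simp_rw [hpt]
    rw [MeasureTheory.integral_const_mul, ftc_c (s / w) hc1]
  -- transfer along the substitution
  have hGint : IntegrableOn
      (fun M : ℝ => Real.sqrt (1 - a / M) / (M * (w ^ 2 + M))) (Set.Ioi a) := by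
    rw [← himage, integrableOn_image_iff_integrableOn_abs_deriv_smul hmeas hderiv hinj]
    exact hψint.congr_fun (fun u hu => (hkey u hu).symm) hmeas
  have hGval : ∫ M in Set.Ioi a, Real.sqrt (1 - a / M) / (M * (w ^ 2 + M))
      = 1 / w ^ 2 * ((s / w) * (Real.log (s / w + 1) - Real.log (s / w - 1)) - 2) := by
    rw [← himage, integral_image_eq_integral_abs_deriv_smul hmeas hderiv hinj,
      MeasureTheory.setIntegral_congr_fun hmeas hkey]
    exact hIoo
  -- relate rho-expression to G
  have heq : Set.EqOn (fun M : ℝ => rho m M / (w ^ 2 + M))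
      (fun M : ℝ => (1 / (16 * Real.pi ^ 2)) *
        (Real.sqrt (1 - a / M) / (M * (w ^ 2 + M)))) (Set.Ioi a) := by
    intro M hM
    have hM0 : 0 < M := ha.trans hM
    have hMw : 0 < w ^ 2 + M := by positivity
    simp only [rho]
    rw [if_pos (show 4 * m ^ 2 ≤ M from ha_def ▸ le_of_lt hM),
      show (1:ℝ) - 4 * m ^ 2 / M = 1 - a / M from by rw [ha_def]]
    generalize Real.sqrt (1 - a / M) = X
    field_simp
  constructor
  · have h1 : IntegrableOn (fun M : ℝ => (1 / (16 * Real.pi ^ 2)) *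
        (Real.sqrt (1 - a / M) / (M * (w ^ 2 + M)))) (Set.Ioi a) := hGint.const_mul _
    have h2 : IntegrableOn (fun M : ℝ => rho m M / (w ^ 2 + M)) (Set.Ioi a) :=
      h1.congr_fun (fun M hM => (heq hM).symm) measurableSet_Ioi
    exact h2.congr_set_ae Ioi_ae_eq_Ici.symm
  · rw [MeasureTheory.integral_Ici_eq_integral_Ioi,
      MeasureTheory.setIntegral_congr_fun measurableSet_Ioi heq,
      MeasureTheory.integral_const_mul, hGval]
    have h4m : Real.sqrt (4 + w ^ 2 / m ^ 2) = s / m := by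
      rw [show 4 + w ^ 2 / m ^ 2 = (w ^ 2 + a) / m ^ 2 by rw [ha_def]; field_simp; ring,
        Real.sqrt_div (by positivity), Real.sqrt_sq hm.le]
    have h1m : Real.sqrt (1 + w ^ 2 / a) = s / (2 * m) := by
      rw [show 1 + w ^ 2 / a = (w ^ 2 + a) / (2 * m) ^ 2 by rw [ha_def]; field_simp; ring,
        Real.sqrt_div (by positivity), Real.sqrt_sq (by positivity)]
    rw [h4m, h1m]
    congr 1
    -- log identity
    have hc1e : s / w + 1 = (s + w) / w := by field_simp
    have hc2e : s / w - 1 = (s - w) / w := by field_simp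
    have hkey2 : ((w + s) / (2 * m)) ^ 2 = (s + w) / (s - w) := by
      rw [div_pow, div_eq_div_iff (by positivity) (by linarith)]
      nlinarith
    have hL : Real.log (s + w) - Real.log (s - w)
        = 2 * Real.log ((w + s) / (2 * m)) := by
      rw [← Real.log_div (by positivity) (by linarith : (0:ℝ) < s - w).ne', ← hkey2,
        Real.log_pow]
      norm_num
    have hlog : Real.log (s / w + 1) - Real.log (s / w - 1)
        = 2 * Real.log (w / (2 * m) + s / (2 * m)) := by
      rw [hc1e, hc2e, Real.log_div (by positivity) hw.ne',
        Real.log_div (by linarith : (0:ℝ) < s - w).ne' hw.ne',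
        show w / (2 * m) + s / (2 * m) = (w + s) / (2 * m) by ring]
      linarith [hL]
    rw [hlog]
    field_simp
end

section
/- Let m > 0 and let a₁, a₂ ∈ (−∞, 4m²), and let A(γ) := (a₁ − γ)·(a₂ − γ)·J(γ) for γ ∈ (−∞, 4m²). Then the derivative A′ of A is monotonically increasing on (−∞, 4m²) and its image is all of ℝ: for every b ∈ ℝ there exists γ < 4m² such that A′(γ) = b. -/
set_option maxHeartbeats 1000000

open MeasureTheory Set Real

lemma rho_def (m M : ℝ) (hM : 4 * m ^ 2 ≤ M) :
    rho m M = (1 / (16 * Real.pi ^ 2 * M)) * Real.sqrt (1 - 4 * m ^ 2 / M) := by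
  rw [rho, if_pos hM]

lemma rho_nonneg (m M : ℝ) : 0 ≤ rho m M := by
  unfold rho
  split
  case isTrue h =>
    have hM : (0:ℝ) ≤ M := le_trans (by positivity) h
    positivity
  case isFalse _ => exact le_refl 0

lemma rho_meas (m : ℝ) : Measurable (rho m) := by
  unfold rho
  apply Measurable.ite (measurableSet_le measurable_const measurable_id)
  · fun_prop
  · exact measurable_const

lemma rho_le (m M : ℝ) (hm : 0 < m) (hM : 4 * m ^ 2 ≤ M) :
    rho m M ≤ 1 / (16 * Real.pi ^ 2 * M) := by
  have hM0 : (0:ℝ) < M := lt_of_lt_of_le (by positivity) hM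
  rw [rho, if_pos hM]
  have h1 : Real.sqrt (1 - 4 * m ^ 2 / M) ≤ 1 := by
    rw [Real.sqrt_le_one]
    have : 0 ≤ 4 * m ^ 2 / M := by positivity
    linarith
  calc 1 / (16 * Real.pi ^ 2 * M) * Real.sqrt (1 - 4 * m ^ 2 / M)
      ≤ 1 / (16 * Real.pi ^ 2 * M) * 1 := by
        apply mul_le_mul_of_nonneg_left h1 (by positivity)
    _ = 1 / (16 * Real.pi ^ 2 * M) := mul_one _

lemma int_one_div_sq {c : ℝ} (hc : 0 < c) : IntegrableOn (fun M => 1 / M ^ 2) (Ici c) := by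
  rw [integrableOn_Ici_iff_integrableOn_Ioi]
  have h := integrableOn_Ioi_rpow_of_lt (show (-2:ℝ) < -1 by norm_num) hc
  apply h.congr_fun ?_ measurableSet_Ioi
  intro x hx
  have hx0 : (0:ℝ) < x := hc.trans hx
  simp only
  rw [show (-2:ℝ) = ((-2:ℤ):ℝ) by norm_num, Real.rpow_intCast, zpow_neg]
  rw [show ((2:ℤ)) = ((2:ℕ):ℤ) by rfl, zpow_natCast, one_div]

lemma inv_sub_le {c γ M : ℝ} (hγ : γ < c) (hc : 0 < c) (hM : c ≤ M) :
    1 / (M - γ) ≤ (1 + |γ| / (c - γ)) / M := by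
  have hM0 : 0 < M := hc.trans_le hM
  have hcγ : 0 < c - γ := by linarith
  have hMγ : 0 < M - γ := by linarith
  rw [div_le_div_iff₀ hMγ hM0]
  have hK0 : 0 ≤ |γ| / (c - γ) := by positivity
  have h1 : |γ| / (c - γ) * (c - γ) ≤ |γ| / (c - γ) * (M - γ) :=
    mul_le_mul_of_nonneg_left (by linarith) hK0
  have h2 : |γ| / (c - γ) * (c - γ) = |γ| := by field_simp
  have h3 : γ ≤ |γ| := le_abs_self γ
  nlinarith

lemma int_f1 (m γ : ℝ) (hm : 0 < m) (hγ : γ < 4 * m ^ 2) :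
    IntegrableOn (fun M => rho m M / (M - γ)) (Ici (4 * m ^ 2)) := by
  have hc : 0 < 4 * m ^ 2 := by positivity
  have hcγ : 0 < 4 * m ^ 2 - γ := by linarith
  have hK0 : 0 ≤ |γ| / (4 * m ^ 2 - γ) := div_nonneg (abs_nonneg γ) hcγ.le
  have hint : IntegrableOn
      (fun M => ((1 + |γ| / (4 * m ^ 2 - γ)) / (16 * Real.pi ^ 2)) * (1 / M ^ 2))
      (Ici (4 * m ^ 2)) := (int_one_div_sq hc).const_mul _
  apply Integrable.mono hint
  · exact ((rho_meas m).div (measurable_id.sub_const γ)).aestronglyMeasurable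
  rw [ae_restrict_iff' measurableSet_Ici]
  filter_upwards with M hM
  have hM' : 4 * m ^ 2 ≤ M := hM
  have hM0 : 0 < M := hc.trans_le hM'
  have hMγ : 0 < M - γ := by linarith [hγ.trans_le hM']
  have hρ := rho_nonneg m M
  rw [Real.norm_of_nonneg (by positivity), Real.norm_of_nonneg (by positivity)]
  calc rho m M / (M - γ) ≤ (1 / (16 * Real.pi ^ 2 * M)) / (M - γ) := by
        gcongr
        exact rho_le m M hm hM'
    _ = (1 / (16 * Real.pi ^ 2 * M)) * (1 / (M - γ)) := div_eq_mul_one_div _ _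
    _ ≤ (1 / (16 * Real.pi ^ 2 * M)) * ((1 + |γ| / (4 * m ^ 2 - γ)) / M) :=
        mul_le_mul_of_nonneg_left (inv_sub_le hγ hc hM') (by positivity)
    _ = ((1 + |γ| / (4 * m ^ 2 - γ)) / (16 * Real.pi ^ 2)) * (1 / M ^ 2) := by
        rw [div_mul_div_comm, div_mul_div_comm, one_mul, mul_one, pow_two]; ring_nf

lemma int_f2 (m γ : ℝ) (hm : 0 < m) (hγ : γ < 4 * m ^ 2) :
    IntegrableOn (fun M => rho m M / (M - γ) ^ 2) (Ici (4 * m ^ 2)) := by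
  have hc : 0 < 4 * m ^ 2 := by positivity
  have hcγ : 0 < 4 * m ^ 2 - γ := by linarith
  have hint := (int_f1 m γ hm hγ).const_mul (1 / (4 * m ^ 2 - γ))
  apply Integrable.mono hint
  · exact ((rho_meas m).div ((measurable_id.sub_const γ).pow_const 2)).aestronglyMeasurable
  rw [ae_restrict_iff' measurableSet_Ici]
  filter_upwards with M hM
  have hM' : 4 * m ^ 2 ≤ M := hM
  have hM0 : 0 < M := hc.trans_le hM'
  have hMγ : 0 < M - γ := by linarith [hγ.trans_le hM']
  have hρ := rho_nonneg m M
  rw [Real.norm_of_nonneg (by positivity), Real.norm_of_nonneg (by positivity)]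
  calc rho m M / (M - γ) ^ 2 = (rho m M / (M - γ)) * (1 / (M - γ)) := by
        rw [pow_two, ← div_div, div_eq_mul_one_div]
    _ ≤ (rho m M / (M - γ)) * (1 / (4 * m ^ 2 - γ)) := by
        apply mul_le_mul_of_nonneg_left (one_div_le_one_div_of_le hcγ (by linarith)) (by positivity)
    _ = 1 / (4 * m ^ 2 - γ) * (rho m M / (M - γ)) := by ring

/-- The Stieltjes transform `J(γ) = ∫_{4m²}^∞ ρ(M)/(M − γ) dM`. -/
noncomputable def Jfun (m γ : ℝ) : ℝ :=
  ∫ M in Set.Ici (4 * m ^ 2), rho m M / (M - γ)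

lemma hasDerivAt_J (m γ₀ : ℝ) (hm : 0 < m) (hγ : γ₀ < 4 * m ^ 2) :
    HasDerivAt (Jfun m) (∫ M in Set.Ici (4 * m ^ 2), rho m M / (M - γ₀) ^ 2) γ₀ := by
  set c := 4 * m ^ 2 with hcdef
  set ε := (c - γ₀) / 2 with hεdef
  have hε : 0 < ε := by simp only [hεdef]; linarith
  set γ₁ := (γ₀ + c) / 2 with hγ₁def
  have hγ₁ : γ₁ < c := by simp only [hγ₁def]; linarith
  have key := hasDerivAt_integral_of_dominated_loc_of_deriv_le
    (F := fun γ M => rho m M / (M - γ)) (F' := fun γ M => rho m M / (M - γ) ^ 2)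
    (x₀ := γ₀) (bound := fun M => rho m M / (M - γ₁) ^ 2)
    (μ := volume.restrict (Ici c)) (Metric.ball_mem_nhds γ₀ hε)
    (Filter.Eventually.of_forall fun γ =>
      ((rho_meas m).div (measurable_id.sub_const γ)).aestronglyMeasurable)
    (int_f1 m γ₀ hm hγ)
    (((rho_meas m).div ((measurable_id.sub_const γ₀).pow_const 2)).aestronglyMeasurable)
    ?bound (int_f2 m γ₁ hm hγ₁) ?diff
  · exact key.2
  case bound =>
    rw [ae_restrict_iff' measurableSet_Ici]
    filter_upwards with M hM
    intro γ hγball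
    have hM' : c ≤ M := hM
    have hMγ₁ : 0 < M - γ₁ := by linarith [hγ₁.trans_le hM']
    have hγγ₁ : γ < γ₁ := by
      have := abs_lt.1 (mem_ball_iff_norm.1 hγball)
      simp only [hγ₁def, hεdef] at *
      linarith [this.2]
    have hMγ : 0 < M - γ := by linarith
    have hρ := rho_nonneg m M
    rw [Real.norm_of_nonneg (by positivity)]
    gcongr
  case diff =>
    rw [ae_restrict_iff' measurableSet_Ici]
    filter_upwards with M hM
    intro γ hγball
    have hM' : c ≤ M := hM
    have hγγ₁ : γ < γ₁ := by
      have := abs_lt.1 (mem_ball_iff_norm.1 hγball)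
      simp only [hγ₁def, hεdef] at *
      linarith [this.2]
    have hMγ : 0 < M - γ := by linarith [hγ₁.trans_le hM']
    have h1 : HasDerivAt (fun γ => M - γ) (-1) γ := by
      simpa using (hasDerivAt_id γ).const_sub M
    have h2 := (h1.inv (ne_of_gt hMγ)).const_mul (rho m M)
    simpa [div_eq_mul_inv] using h2

noncomputable def Gfun (m a₁ a₂ γ : ℝ) : ℝ :=
  ∫ M in Set.Ici (4 * m ^ 2), rho m M * ((M - a₁) * (M - a₂) / (M - γ) ^ 2 - 1)

lemma eqOnIci (m a₁ a₂ γ : ℝ) (hm : 0 < m) (hγ : γ < 4 * m ^ 2) :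
    EqOn (fun M => (2 * γ - a₁ - a₂) * (rho m M / (M - γ)) +
        (a₁ - γ) * (a₂ - γ) * (rho m M / (M - γ) ^ 2))
      (fun M => rho m M * ((M - a₁) * (M - a₂) / (M - γ) ^ 2 - 1)) (Ici (4 * m ^ 2)) := by
  intro M hM
  have hMγ : 0 < M - γ := by
    have : (4:ℝ) * m ^ 2 ≤ M := hM
    linarith
  simp only
  field_simp
  ring

lemma int_G (m a₁ a₂ γ : ℝ) (hm : 0 < m) (hγ : γ < 4 * m ^ 2) :
    IntegrableOn (fun M => rho m M * ((M - a₁) * (M - a₂) / (M - γ) ^ 2 - 1))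
      (Ici (4 * m ^ 2)) :=
  IntegrableOn.congr_fun (((int_f1 m γ hm hγ).const_mul (2 * γ - a₁ - a₂)).add
    ((int_f2 m γ hm hγ).const_mul ((a₁ - γ) * (a₂ - γ))))
    (eqOnIci m a₁ a₂ γ hm hγ) measurableSet_Ici

lemma hasDerivAt_A (m a₁ a₂ : ℝ) (hm : 0 < m) (A : ℝ → ℝ)
    (hA : ∀ γ : ℝ, γ < 4 * m ^ 2 → A γ = (a₁ - γ) * (a₂ - γ) * Jfun m γ)
    (γ : ℝ) (hγ : γ < 4 * m ^ 2) :
    HasDerivAt A (Gfun m a₁ a₂ γ) γ := by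
  have hP : HasDerivAt (fun γ => (a₁ - γ) * (a₂ - γ)) (2 * γ - a₁ - a₂) γ := by
    have h := ((hasDerivAt_id γ).const_sub a₁).mul ((hasDerivAt_id γ).const_sub a₂)
    refine (h : HasDerivAt (fun γ => (a₁ - γ) * (a₂ - γ)) _ γ).congr_deriv ?_
    simp only [id_eq]
    ring
  have hJ := hasDerivAt_J m γ hm hγ
  have hPJ := hP.mul hJ
  have hval : (2 * γ - a₁ - a₂) * Jfun m γ +
      (a₁ - γ) * (a₂ - γ) * (∫ M in Set.Ici (4 * m ^ 2), rho m M / (M - γ) ^ 2) =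
      Gfun m a₁ a₂ γ := by
    rw [Jfun, ← integral_const_mul, ← integral_const_mul, ← integral_add
      ((int_f1 m γ hm hγ).const_mul (2 * γ - a₁ - a₂))
      ((int_f2 m γ hm hγ).const_mul ((a₁ - γ) * (a₂ - γ))), Gfun]
    exact setIntegral_congr_fun measurableSet_Ici (eqOnIci m a₁ a₂ γ hm hγ)
  rw [← hval]
  apply hPJ.congr_of_eventuallyEq
  filter_upwards [Iio_mem_nhds hγ] with x hx
  exact hA x hx

-- integrability of rho on a compact interval
lemma int_rho_Icc (m u v : ℝ) (hm : 0 < m) (hu : 4 * m ^ 2 ≤ u) :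
    IntegrableOn (rho m) (Icc u v) := by
  have hc : 0 < 4 * m ^ 2 := by positivity
  apply Integrable.mono (g := fun _ : ℝ => 1 / (16 * Real.pi ^ 2 * (4 * m ^ 2)))
    (integrableOn_const (s := Icc u v) (μ := volume) (C := 1 / (16 * Real.pi ^ 2 * (4 * m ^ 2)))
      (by rw [Real.volume_Icc]; exact ENNReal.ofReal_ne_top)).integrable
    (rho_meas m).aestronglyMeasurable
  rw [ae_restrict_iff' measurableSet_Icc]
  filter_upwards with M hM
  have hM1 : 4 * m ^ 2 ≤ M := hu.trans hM.1
  have hM0 : 0 < M := hc.trans_le hM1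
  have hρ := rho_nonneg m M
  rw [Real.norm_of_nonneg hρ, Real.norm_of_nonneg (by positivity)]
  calc rho m M ≤ 1 / (16 * Real.pi ^ 2 * M) := rho_le m M hm hM1
    _ ≤ 1 / (16 * Real.pi ^ 2 * (4 * m ^ 2)) := by gcongr

-- rho has divergent integral: ∫ over Icc c T exceeds any b for suitable T
lemma rho_int_large (m : ℝ) (hm : 0 < m) (b : ℝ) :
    ∃ T : ℝ, 2 * (4 * m ^ 2) ≤ T ∧ b ≤ ∫ M in Icc (4 * m ^ 2) T, rho m M := by
  have hc : 0 < 4 * m ^ 2 := by positivity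
  set c := 4 * m ^ 2 with hcdef
  set κ := Real.sqrt (1 / 2) / (16 * Real.pi ^ 2) with hκdef
  have hκ0 : 0 < κ := by
    have : (0:ℝ) < Real.sqrt (1/2) := Real.sqrt_pos.2 (by norm_num)
    positivity
  refine ⟨2 * c * Real.exp ((|b| + 1) / κ), ?_, ?_⟩
  · have h1 : (1:ℝ) ≤ Real.exp ((|b| + 1) / κ) := by
      rw [Real.one_le_exp_iff]
      positivity
    nlinarith
  set T := 2 * c * Real.exp ((|b| + 1) / κ) with hTdef
  have hexp1 : (1:ℝ) ≤ Real.exp ((|b| + 1) / κ) := by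
    rw [Real.one_le_exp_iff]; positivity
  have h2cT : 2 * c ≤ T := by nlinarith
  have hcT : c ≤ T := by linarith
  -- lower bound rho by κ/M on [2c, T]
  have hlow : ∀ M ∈ Icc (2 * c) T, κ * (1 / M) ≤ rho m M := by
    intro M hM
    have hM2c : 2 * c ≤ M := hM.1
    have hMc : c ≤ M := by linarith
    have hM0 : 0 < M := hc.trans_le hMc
    rw [rho_def m M hMc]
    have hsq : Real.sqrt (1 / 2) ≤ Real.sqrt (1 - c / M) := by
      apply Real.sqrt_le_sqrt
      have : c / M ≤ 1 / 2 := by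
        rw [div_le_iff₀ hM0]
        linarith
      linarith
    calc κ * (1 / M) = (1 / (16 * Real.pi ^ 2 * M)) * Real.sqrt (1 / 2) := by
          rw [hκdef]; field_simp
      _ ≤ (1 / (16 * Real.pi ^ 2 * M)) * Real.sqrt (1 - c / M) := by
          apply mul_le_mul_of_nonneg_left hsq (by positivity)
  -- the log integral
  have hloginteg : ∫ M in Icc (2 * c) T, κ * (1 / M) = κ * Real.log (T / (2 * c)) := by
    have h0 : (0:ℝ) ∉ Set.uIcc (2 * c) T := by
      rw [Set.uIcc_of_le h2cT]
      intro h
      have := h.1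
      nlinarith
    rw [integral_Icc_eq_integral_Ioc, ← intervalIntegral.integral_of_le h2cT,
      intervalIntegral.integral_const_mul, integral_one_div h0]
  -- conclude
  have hTlog : Real.log (T / (2 * c)) = (|b| + 1) / κ := by
    rw [hTdef]
    rw [mul_comm (2 * c), mul_div_assoc, div_self (by positivity : (2:ℝ) * c ≠ 0), mul_one,
      Real.log_exp]
  have hstep1 : ∫ M in Icc (2 * c) T, κ * (1 / M) ≤ ∫ M in Icc (2 * c) T, rho m M := by
    have hcont : ContinuousOn (fun M : ℝ => κ * (1 / M)) (Icc (2 * c) T) := by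
      apply ContinuousOn.mul continuousOn_const
      apply ContinuousOn.div continuousOn_const continuousOn_id
      intro x hx
      exact ne_of_gt (lt_of_lt_of_le (by positivity) hx.1)
    exact setIntegral_mono_on hcont.integrableOn_Icc
      ((int_rho_Icc m (2 * c) T hm (by linarith)).mono_set (fun x hx => hx))
      measurableSet_Icc hlow
  have hstep2 : ∫ M in Icc (2 * c) T, rho m M ≤ ∫ M in Icc c T, rho m M := by
    apply setIntegral_mono_set (int_rho_Icc m c T hm le_rfl)
    · exact Filter.Eventually.of_forall (fun M => rho_nonneg m M)
    · apply HasSubset.Subset.eventuallyLE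
      apply Icc_subset_Icc_left
      linarith
  have : b ≤ κ * Real.log (T / (2 * c)) := by
    rw [hTlog]
    rw [mul_div_assoc] at *
    have : κ * ((|b| + 1) / κ) = |b| + 1 := by field_simp
    rw [this]
    have := le_abs_self b
    linarith
  linarith [hloginteg ▸ hstep1, hstep2]

lemma G_low (m a₁ a₂ : ℝ) (hm : 0 < m) (ha₁ : a₁ < 4 * m ^ 2) (ha₂ : a₂ < 4 * m ^ 2)
    (b : ℝ) : ∃ γ, γ < 4 * m ^ 2 ∧ Gfun m a₁ a₂ γ < b := by
  have hc : 0 < 4 * m ^ 2 := by positivity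
  obtain ⟨T, hT2c, hTint⟩ := rho_int_large m hm (2 * |b| + 2)
  have hcT : 4 * m ^ 2 ≤ T := by linarith
  set S := T + |a₁| + |a₂| + 4 * m ^ 2 + 1 with hSdef
  have hS0 : 0 < S := by
    have := abs_nonneg a₁; have := abs_nonneg a₂; simp only [hSdef]; linarith
  set γ := min a₁ a₂ - 2 * S with hγdef
  have hγa₁ : γ ≤ a₁ := by
    have := min_le_left a₁ a₂; simp only [hγdef]; linarith
  have hγa₂ : γ ≤ a₂ := by
    have := min_le_right a₁ a₂; simp only [hγdef]; linarith
  have hγc : γ < 4 * m ^ 2 := lt_of_le_of_lt hγa₁ ha₁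
  refine ⟨γ, hγc, ?_⟩
  have int1 : IntegrableOn
      (fun M => rho m M * ((M - a₁) * (M - a₂) / (M - γ) ^ 2 - 1)) (Icc (4 * m ^ 2) T) :=
    (int_G m a₁ a₂ γ hm hγc).mono_set (fun x hx => hx.1)
  have int2 : IntegrableOn
      (fun M => rho m M * ((M - a₁) * (M - a₂) / (M - γ) ^ 2 - 1)) (Ioi T) :=
    (int_G m a₁ a₂ γ hm hγc).mono_set (fun x hx => le_trans hcT (le_of_lt hx))
  have hdisj : Disjoint (Icc (4 * m ^ 2) T) (Ioi T) := by
    rw [Set.disjoint_left]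
    intro x hx hx'
    exact absurd hx.2 (not_le.2 hx')
  have hsplit : Gfun m a₁ a₂ γ =
      (∫ M in Icc (4 * m ^ 2) T, rho m M * ((M - a₁) * (M - a₂) / (M - γ) ^ 2 - 1)) +
      ∫ M in Ioi T, rho m M * ((M - a₁) * (M - a₂) / (M - γ) ^ 2 - 1) := by
    rw [Gfun, ← Icc_union_Ioi_eq_Ici hcT, setIntegral_union hdisj measurableSet_Ioi int1 int2]
  have h2 : (∫ M in Ioi T, rho m M * ((M - a₁) * (M - a₂) / (M - γ) ^ 2 - 1)) ≤ 0 := by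
    apply setIntegral_nonpos measurableSet_Ioi
    intro M hM
    have hMT : T < M := hM
    have hMc : 4 * m ^ 2 ≤ M := le_trans hcT hMT.le
    have hMγ : 0 < M - γ := by linarith
    have hρ := rho_nonneg m M
    have hq : (M - a₁) * (M - a₂) / (M - γ) ^ 2 - 1 ≤ 0 := by
      have hX : (M - a₁) * (M - a₂) ≤ (M - γ) ^ 2 := by nlinarith
      have := div_le_one_of_le₀ hX (by positivity)
      linarith
    calc rho m M * ((M - a₁) * (M - a₂) / (M - γ) ^ 2 - 1) ≤ rho m M * 0 :=
          mul_le_mul_of_nonneg_left hq hρ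
      _ = 0 := mul_zero _
  have h1 : (∫ M in Icc (4 * m ^ 2) T, rho m M * ((M - a₁) * (M - a₂) / (M - γ) ^ 2 - 1)) ≤
      -(1/2) * ∫ M in Icc (4 * m ^ 2) T, rho m M := by
    rw [← integral_const_mul]
    apply setIntegral_mono_on int1 ((int_rho_Icc m (4 * m ^ 2) T hm le_rfl).const_mul _)
      measurableSet_Icc
    intro M hM
    have hMc : 4 * m ^ 2 ≤ M := hM.1
    have hMT : M ≤ T := hM.2
    have hMγ : 0 < M - γ := by linarith
    have hρ := rho_nonneg m M
    have hminle : min a₁ a₂ ≤ a₁ := min_le_left _ _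
    have habs1 := abs_nonneg a₁
    have habs2 := abs_nonneg a₂
    have hXS : (M - a₁) * (M - a₂) ≤ S * S := by
      have h1' : M - a₁ ≤ S := by
        have := le_abs_self (-a₁); simp only [abs_neg] at this
        simp only [hSdef]; linarith
      have h2' : M - a₂ ≤ S := by
        have := le_abs_self (-a₂); simp only [abs_neg] at this
        simp only [hSdef]; linarith
      nlinarith
    have hMγ2S : 2 * S ≤ M - γ := by
      simp only [hγdef]; linarith
    have hq : (M - a₁) * (M - a₂) / (M - γ) ^ 2 - 1 ≤ -(1/2) := by
      have : (M - a₁) * (M - a₂) / (M - γ) ^ 2 ≤ 1/2 := by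
        rw [div_le_iff₀ (by positivity)]
        nlinarith
      linarith
    calc rho m M * ((M - a₁) * (M - a₂) / (M - γ) ^ 2 - 1) ≤ rho m M * (-(1/2)) :=
          mul_le_mul_of_nonneg_left hq hρ
      _ = -(1/2) * rho m M := by ring
  rw [hsplit]
  linarith [neg_abs_le b, hTint]

lemma G_high (m a₁ a₂ : ℝ) (hm : 0 < m) (ha₁ : a₁ < 4 * m ^ 2) (ha₂ : a₂ < 4 * m ^ 2)
    (b : ℝ) : ∃ γ, γ < 4 * m ^ 2 ∧ b < Gfun m a₁ a₂ γ := by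
  have hc : 0 < 4 * m ^ 2 := by positivity
  set c := 4 * m ^ 2 with hcdef
  set D := (c - a₁) * (c - a₂) with hDdef
  have hD : 0 < D := mul_pos (by linarith) (by linarith)
  have hsqc : 0 < Real.sqrt (c + 1) := Real.sqrt_pos.2 (by linarith)
  set κ := 1 / (16 * Real.pi ^ 2 * (c + 1) * Real.sqrt (c + 1)) with hκdef
  have hκ : 0 < κ := by
    have hπ := Real.pi_pos
    simp only [hκdef]
    positivity
  set r := κ * D / (9 * (κ + |b| + 1)) with hrdef
  have hb1 : 0 < κ + |b| + 1 := by have := abs_nonneg b; linarith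
  have hr : 0 < r := by simp only [hrdef]; positivity
  have hsqD : 0 < Real.sqrt D := Real.sqrt_pos.2 hD
  set ε := min (min (1/2) (r^2)) (min (min ((c - a₁)/2) ((c - a₂)/2)) (Real.sqrt D / 3))
    with hεdef
  have hε0 : 0 < ε := by
    simp only [hεdef, lt_min_iff]
    refine ⟨⟨by norm_num, by positivity⟩, ⟨by linarith, by linarith⟩, by positivity⟩
  have hεhalf : ε ≤ 1/2 := le_trans (min_le_left _ _) (min_le_left _ _)
  have hεr : ε ≤ r^2 := le_trans (min_le_left _ _) (min_le_right _ _)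
  have hεa₁ : ε ≤ (c - a₁)/2 :=
    le_trans (min_le_right _ _) (le_trans (min_le_left _ _) (min_le_left _ _))
  have hεa₂ : ε ≤ (c - a₂)/2 :=
    le_trans (min_le_right _ _) (le_trans (min_le_left _ _) (min_le_right _ _))
  have hεD : ε ≤ Real.sqrt D / 3 := le_trans (min_le_right _ _) (min_le_right _ _)
  have hεD' : 9 * ε^2 ≤ D := by
    have hsq : Real.sqrt D ^ 2 = D := Real.sq_sqrt hD.le
    nlinarith
  set γ := c - ε with hγdef
  have hγc : γ < c := by simp only [hγdef]; linarith
  have hγa₁ : a₁ ≤ γ := by simp only [hγdef]; linarith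
  have hγa₂ : a₂ ≤ γ := by simp only [hγdef]; linarith
  set u := Real.sqrt ε with hudef
  have hu0 : 0 < u := Real.sqrt_pos.2 hε0
  have hu2 : u^2 = ε := Real.sq_sqrt hε0.le
  have hur : u ≤ r := by
    have h := Real.sqrt_le_sqrt hεr
    rwa [Real.sqrt_sq hr.le] at h
  have hu1 : u ≤ 1 := by
    have h1 : ε ≤ 1 := by linarith
    have h := Real.sqrt_le_sqrt h1
    rwa [Real.sqrt_one] at h
  clear_value D κ r ε γ u
  refine ⟨γ, hγc, ?_⟩
  -- nonnegativity of the integrand on Ici c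
  have hnn : ∀ M ∈ Ici c, 0 ≤ rho m M * ((M - a₁) * (M - a₂) / (M - γ) ^ 2 - 1) := by
    intro M hM
    have hMc : c ≤ M := hM
    have hMγ : 0 < M - γ := by linarith
    have hX : (M - γ)^2 ≤ (M - a₁) * (M - a₂) := by nlinarith
    have : (1:ℝ) ≤ (M - a₁) * (M - a₂) / (M - γ)^2 := (one_le_div (by positivity)).2 hX
    exact mul_nonneg (rho_nonneg m M) (by linarith)
  -- restrict to the small interval s
  have hsub : Icc (c + ε) (c + 2*ε) ⊆ Ici c := by
    intro x hx
    have := hx.1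
    simp only [mem_Ici]
    linarith
  have hstepA : (∫ M in Icc (c + ε) (c + 2*ε),
      rho m M * ((M - a₁) * (M - a₂) / (M - γ) ^ 2 - 1)) ≤ Gfun m a₁ a₂ γ := by
    rw [Gfun]
    apply setIntegral_mono_set (int_G m a₁ a₂ γ hm hγc)
    · filter_upwards [ae_restrict_mem measurableSet_Ici] with M hM
      exact hnn M hM
    · exact HasSubset.Subset.eventuallyLE hsub
  -- pointwise lower bound on s
  set L := κ * u * (D / (9 * ε^2) - 1) with hLdef
  have hL0 : 0 ≤ D / (9 * ε^2) - 1 := by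
    have : (1:ℝ) ≤ D / (9 * ε^2) := (one_le_div (by positivity)).2 hεD'
    linarith
  have hptwise : ∀ M ∈ Icc (c + ε) (c + 2*ε),
      L ≤ rho m M * ((M - a₁) * (M - a₂) / (M - γ) ^ 2 - 1) := by
    intro M hM
    have hM1 : c + ε ≤ M := hM.1
    have hM2 : M ≤ c + 2*ε := hM.2
    have hMc1 : M ≤ c + 1 := by linarith
    have hMc : c ≤ M := by linarith
    have hM0 : 0 < M := by linarith
    have hMγ : 0 < M - γ := by simp only [hγdef]; linarith
    -- rho lower bound
    have hρlow : κ * u ≤ rho m M := by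
      rw [rho_def m M hMc]
      have hfrac : ε / (c + 1) ≤ 1 - c / M := by
        have heq : (M - c) / M = 1 - c / M := by field_simp
        rw [← heq]
        apply div_le_div₀ (by linarith) (by linarith) (by linarith) hMc1
      have hsqrt : Real.sqrt (ε / (c+1)) ≤ Real.sqrt (1 - c / M) := Real.sqrt_le_sqrt hfrac
      have hsqeq : Real.sqrt (ε / (c+1)) = u / Real.sqrt (c+1) := by
        rw [hudef, Real.sqrt_div hε0.le]
      calc κ * u = (1 / (16 * Real.pi ^ 2 * (c + 1))) * (u / Real.sqrt (c+1)) := by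
            rw [hκdef]
            have hπ := Real.pi_pos
            field_simp
        _ ≤ (1 / (16 * Real.pi ^ 2 * M)) * (u / Real.sqrt (c+1)) := by
            have hπ := Real.pi_pos
            apply mul_le_mul_of_nonneg_right ?_ (by positivity)
            gcongr
        _ = (1 / (16 * Real.pi ^ 2 * M)) * Real.sqrt (ε / (c+1)) := by rw [hsqeq]
        _ ≤ (1 / (16 * Real.pi ^ 2 * M)) * Real.sqrt (1 - c / M) := by
            have hπ := Real.pi_pos
            apply mul_le_mul_of_nonneg_left hsqrt (by positivity)
    -- q lower bound
    have hqlow : D / (9 * ε^2) - 1 ≤ (M - a₁) * (M - a₂) / (M - γ) ^ 2 - 1 := by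
      have hDX : D ≤ (M - a₁) * (M - a₂) := by nlinarith
      have hden : (M - γ)^2 ≤ 9 * ε^2 := by
        have h3 : M - γ ≤ 3 * ε := by simp only [hγdef]; linarith
        nlinarith
      have h := div_le_div₀ (le_trans hD.le hDX) hDX (by positivity : (0:ℝ) < (M - γ)^2) hden
      linarith
    exact mul_le_mul hρlow hqlow hL0 (rho_nonneg m M)
  -- integral over s is at least L * ε
  have hstepC : L * ε ≤ ∫ M in Icc (c + ε) (c + 2*ε),
      rho m M * ((M - a₁) * (M - a₂) / (M - γ) ^ 2 - 1) := by
    have hconst : (∫ _ in Icc (c + ε) (c + 2*ε), L) = L * ε := by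
      rw [setIntegral_const, Real.volume_real_Icc, smul_eq_mul]
      rw [show c + 2*ε - (c + ε) = ε by ring, max_eq_left hε0.le]
      ring
    rw [← hconst]
    apply setIntegral_mono_on
      (integrableOn_const (by rw [Real.volume_Icc]; exact ENNReal.ofReal_ne_top))
      ((int_G m a₁ a₂ γ hm hγc).mono_set hsub) measurableSet_Icc hptwise
  -- final arithmetic : b < L * ε
  have hεu4 : ε^2 = u^4 := by rw [← hu2]; ring
  have hgoal : b < L * ε := by
    have hfield1 : κ * (D / (9 * ε^2)) * u^3 * u = κ * D / 9 := by
      have h9 : (9:ℝ) * ε^2 ≠ 0 := by positivity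
      field_simp
      rw [hεu4]
    have hfield2 : (κ + |b| + 1) * r = κ * D / 9 := by
      rw [hrdef]
      field_simp
    have hge : κ + |b| + 1 ≤ κ * (D / (9 * ε^2)) * u^3 := by
      apply le_of_mul_le_mul_right ?_ hu0
      rw [hfield1, ← hfield2]
      exact mul_le_mul_of_nonneg_left hur hb1.le
    have hexp : L * ε = κ * (D / (9 * ε^2)) * u^3 - κ * u^3 := by
      rw [hLdef, ← hu2]
      ring
    have hu3 : u^3 ≤ 1 := pow_le_one₀ hu0.le hu1
    have hκu3 : κ * u^3 ≤ κ := by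
      have := mul_le_mul_of_nonneg_left hu3 hκ.le
      linarith
    have hbabs := le_abs_self b
    linarith
  linarith

lemma G_mono (m a₁ a₂ : ℝ) (hm : 0 < m) (ha₁ : a₁ < 4 * m ^ 2) (ha₂ : a₂ < 4 * m ^ 2) :
    MonotoneOn (Gfun m a₁ a₂) (Set.Iio (4 * m ^ 2)) := by
  intro x hx y hy hxy
  simp only [mem_Iio] at hx hy
  apply setIntegral_mono_on (int_G m a₁ a₂ x hm hx) (int_G m a₁ a₂ y hm hy) measurableSet_Ici
  intro M hM
  have hMc : 4 * m ^ 2 ≤ M := hM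
  have hMy : 0 < M - y := by linarith
  have hMx : 0 < M - x := by linarith
  have hX : 0 ≤ (M - a₁) * (M - a₂) := mul_nonneg (by linarith) (by linarith)
  have hdiv : (M - a₁) * (M - a₂) / (M - x) ^ 2 ≤ (M - a₁) * (M - a₂) / (M - y) ^ 2 := by
    apply div_le_div_of_nonneg_left hX (by positivity)
    nlinarith
  have hρ := rho_nonneg m M
  have := mul_le_mul_of_nonneg_left (show (M - a₁) * (M - a₂) / (M - x) ^ 2 - 1 ≤
    (M - a₁) * (M - a₂) / (M - y) ^ 2 - 1 by linarith) hρ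
  linarith

theorem stmt_5 (m : ℝ) (hm : 0 < m) (a₁ a₂ : ℝ)
    (ha₁ : a₁ < 4 * m ^ 2) (ha₂ : a₂ < 4 * m ^ 2)
    (A : ℝ → ℝ) (hA : ∀ γ : ℝ, γ < 4 * m ^ 2 → A γ = (a₁ - γ) * (a₂ - γ) * Jfun m γ) :
    MonotoneOn (deriv A) (Set.Iio (4 * m ^ 2)) ∧
    ∀ b : ℝ, ∃ γ : ℝ, γ < 4 * m ^ 2 ∧ deriv A γ = b := by
  have hd : ∀ γ ∈ Set.Iio (4 * m ^ 2), deriv A γ = Gfun m a₁ a₂ γ := fun γ hγ =>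
    (hasDerivAt_A m a₁ a₂ hm A hA γ hγ).deriv
  constructor
  · intro x hx y hy hxy
    rw [hd x hx, hd y hy]
    exact G_mono m a₁ a₂ hm ha₁ ha₂ hx hy hxy
  · intro b
    obtain ⟨γl, hγl, hl⟩ := G_low m a₁ a₂ hm ha₁ ha₂ b
    obtain ⟨γh, hγh, hh⟩ := G_high m a₁ a₂ hm ha₁ ha₂ b
    have hlh : γl < γh := by
      by_contra hcon
      push_neg at hcon
      have := G_mono m a₁ a₂ hm ha₁ ha₂ hγh hγl hcon
      linarith
    have hder : ∀ x ∈ Icc γl γh, HasDerivWithinAt A (Gfun m a₁ a₂ x) (Icc γl γh) x := by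
      intro x hx
      exact (hasDerivAt_A m a₁ a₂ hm A hA x (lt_of_le_of_lt hx.2 hγh)).hasDerivWithinAt
    obtain ⟨x, hx, hGx⟩ := exists_hasDerivWithinAt_eq_of_gt_of_lt hlh.le hder hl hh
    refine ⟨x, lt_trans hx.2 hγh, ?_⟩
    rw [hd x (lt_trans hx.2 hγh)]
    exact hGx
end

section
/- Let m > 0 and let a₁, a₂, b₀, b₁, b₂ ∈ ℝ. Suppose that the set of solutions in D of the equation γ·(a₁ − γ)·(a₂ − γ)·J(γ) = b₀ + b₁·γ + b₂·γ² consists of exactly three pairwise distinct elements γ₀, γ₁, γ₂ ∈ D. Then the numbers β₀ := −γ₀·γ₁·γ₂, β₁ := γ₀·γ₁ + γ₀·γ₂ + γ₁·γ₂ and β₂ := −γ₀ − γ₁ − γ₂ are real (i.e. have vanishing imaginary part), and the polynomial P(M) = M³ + β₂·M² + β₁·M + β₀ has no zeros in the real interval [4m², ∞). -/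
open MeasureTheory Set Real

/-- The domain `D = ℂ ∖ [4m², ∞)`, i.e. the complement of the real ray `[4m², ∞)`. -/
def Dset (m : ℝ) : Set ℂ := {z : ℂ | ¬(z.im = 0 ∧ 4 * m ^ 2 ≤ z.re)}

/-- The complex Stieltjes transform `J(z) = ∫_{4m²}^∞ ρ(M)/(M − z) dM`. -/
noncomputable def Jc (m : ℝ) (z : ℂ) : ℂ :=
  ∫ M in Set.Ici (4 * m ^ 2), (rho m M : ℂ) / ((M : ℂ) - z)

lemma Jc_conj (m : ℝ) (z : ℂ) :
    Jc m ((starRingEnd ℂ) z) = (starRingEnd ℂ) (Jc m z) := by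
  unfold Jc
  rw [← integral_conj]
  congr 1 with M
  simp [map_div₀, Complex.conj_ofReal]

lemma Dset_conj (m : ℝ) (z : ℂ) (hz : z ∈ Dset m) : (starRingEnd ℂ) z ∈ Dset m := by
  simp only [Dset, Set.mem_setOf_eq, Complex.conj_im, Complex.conj_re, neg_eq_zero] at *
  exact hz

theorem stmt_8 (m : ℝ) (hm : 0 < m) (a₁ a₂ b₀ b₁ b₂ : ℝ) (γ₀ γ₁ γ₂ : ℂ)
    (hγ₀ : γ₀ ∈ Dset m) (hγ₁ : γ₁ ∈ Dset m) (hγ₂ : γ₂ ∈ Dset m)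
    (hne₀₁ : γ₀ ≠ γ₁) (hne₀₂ : γ₀ ≠ γ₂) (hne₁₂ : γ₁ ≠ γ₂)
    (hsol : {γ : ℂ | γ ∈ Dset m ∧
        γ * ((a₁ : ℂ) - γ) * ((a₂ : ℂ) - γ) * Jc m γ =
          (b₀ : ℂ) + (b₁ : ℂ) * γ + (b₂ : ℂ) * γ ^ 2} = {γ₀, γ₁, γ₂}) :
    ((-(γ₀ * γ₁ * γ₂)).im = 0 ∧ (γ₀ * γ₁ + γ₀ * γ₂ + γ₁ * γ₂).im = 0 ∧
      (-γ₀ - γ₁ - γ₂).im = 0) ∧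
    ∀ M : ℝ, 4 * m ^ 2 ≤ M →
      (M : ℂ) ^ 3 + (-γ₀ - γ₁ - γ₂) * (M : ℂ) ^ 2 +
        (γ₀ * γ₁ + γ₀ * γ₂ + γ₁ * γ₂) * (M : ℂ) + (-(γ₀ * γ₁ * γ₂)) ≠ 0 := by
  set c := starRingEnd ℂ with hc
  have hclosed : ∀ γ : ℂ, γ ∈ ({γ₀, γ₁, γ₂} : Set ℂ) → c γ ∈ ({γ₀, γ₁, γ₂} : Set ℂ) := by
    intro γ hγ
    rw [← hsol] at hγ ⊢
    obtain ⟨hD, heq⟩ := hγ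
    refine ⟨Dset_conj m γ hD, ?_⟩
    have := congrArg c heq
    simpa [hc, Jc_conj, map_mul, map_sub, map_add, Complex.conj_ofReal] using this
  have h0 : c γ₀ ∈ ({γ₀, γ₁, γ₂} : Set ℂ) := hclosed γ₀ (by simp)
  have h1 : c γ₁ ∈ ({γ₀, γ₁, γ₂} : Set ℂ) := hclosed γ₁ (by simp)
  have h2 : c γ₂ ∈ ({γ₀, γ₁, γ₂} : Set ℂ) := hclosed γ₂ (by simp)
  have hinj : Function.Injective c := (starRingEnd ℂ).injective
  have hF : ({c γ₀, c γ₁, c γ₂} : Finset ℂ) = ({γ₀, γ₁, γ₂} : Finset ℂ) := by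
    apply Finset.eq_of_subset_of_card_le
    · intro x hx
      simp only [Finset.mem_insert, Finset.mem_singleton] at hx ⊢
      rcases hx with h | h | h <;> subst h
      · simpa using h0
      · simpa using h1
      · simpa using h2
    · rw [Finset.card_insert_of_notMem (by simp [hne₀₁, hne₀₂]),
        Finset.card_insert_of_notMem (by simp [hne₁₂]), Finset.card_singleton,
        Finset.card_insert_of_notMem (by simp [hinj.ne hne₀₁, hinj.ne hne₀₂]),
        Finset.card_insert_of_notMem (by simp [hinj.ne hne₁₂]), Finset.card_singleton]
  have hsum : ∀ f : ℂ → ℂ, f (c γ₀) + f (c γ₁) + f (c γ₂) = f γ₀ + f γ₁ + f γ₂ := by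
    intro f
    have h1' : ∑ x ∈ ({c γ₀, c γ₁, c γ₂} : Finset ℂ), f x
        = ∑ x ∈ ({γ₀, γ₁, γ₂} : Finset ℂ), f x := by rw [hF]
    rw [Finset.sum_insert (by simp [hinj.ne hne₀₁, hinj.ne hne₀₂]),
      Finset.sum_insert (by simp [hinj.ne hne₁₂]), Finset.sum_singleton,
      Finset.sum_insert (by simp [hne₀₁, hne₀₂]),
      Finset.sum_insert (by simp [hne₁₂]), Finset.sum_singleton] at h1'
    linear_combination h1'
  have hprod : c γ₀ * c γ₁ * c γ₂ = γ₀ * γ₁ * γ₂ := by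
    have h1' : ∏ x ∈ ({c γ₀, c γ₁, c γ₂} : Finset ℂ), x
        = ∏ x ∈ ({γ₀, γ₁, γ₂} : Finset ℂ), x := by rw [hF]
    rw [Finset.prod_insert (by simp [hinj.ne hne₀₁, hinj.ne hne₀₂]),
      Finset.prod_insert (by simp [hinj.ne hne₁₂]), Finset.prod_singleton,
      Finset.prod_insert (by simp [hne₀₁, hne₀₂]),
      Finset.prod_insert (by simp [hne₁₂]), Finset.prod_singleton] at h1'
    linear_combination h1'
  have hp1 : c γ₀ + c γ₁ + c γ₂ = γ₀ + γ₁ + γ₂ := hsum id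
  have hp2 : c γ₀ ^ 2 + c γ₁ ^ 2 + c γ₂ ^ 2 = γ₀ ^ 2 + γ₁ ^ 2 + γ₂ ^ 2 := hsum (· ^ 2)
  constructor
  · refine ⟨?_, ?_, ?_⟩
    · rw [← Complex.conj_eq_iff_im]
      simp only [map_neg, map_mul]
      rw [hprod]
    · rw [← Complex.conj_eq_iff_im]
      simp only [map_add, map_mul]
      linear_combination (hp1 * (c γ₀ + c γ₁ + c γ₂ + γ₀ + γ₁ + γ₂) - hp2) / 2
    · rw [← Complex.conj_eq_iff_im]
      simp only [map_sub, map_neg]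
      linear_combination -hp1
  · intro M hM h
    have hfac : ((M : ℂ) - γ₀) * ((M : ℂ) - γ₁) * ((M : ℂ) - γ₂) = 0 := by
      linear_combination h
    have hmem : (M : ℂ) ∉ Dset m := by
      simp [Dset, hM]
    rcases mul_eq_zero.1 hfac with h' | h'
    · rcases mul_eq_zero.1 h' with h' | h' <;>
        [exact hmem (sub_eq_zero.1 h' ▸ hγ₀); exact hmem (sub_eq_zero.1 h' ▸ hγ₁)]
    · exact hmem (sub_eq_zero.1 h' ▸ hγ₂)
end

section
/- Let m > 0 and let f : ℝ → ℝ be continuous with compact support. Then (1/(2π)³) · ∫_{ℝ³} f(2·√(‖q‖² + m²)) / (4·(‖q‖² + m²)) dq = (1/(16π²)) · ∫_{2m}^∞ f(s)·√(1 − 4m²/s²) ds, where the left-hand integral is over q in three-dimensional Euclidean space with Lebesgue measure and ‖q‖ is the Euclidean norm, and the right-hand integral is the Lebesgue integral over the set {s : ℝ | s ≥ 2m}. -/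
open MeasureTheory Set Real
set_option maxHeartbeats 1000000

theorem stmt_11 (m : ℝ) (hm : 0 < m) (f : ℝ → ℝ)
    (hf : Continuous f) (hsupp : HasCompactSupport f) :
    (1 / (2 * Real.pi) ^ 3) *
        ∫ q : EuclideanSpace ℝ (Fin 3),
          f (2 * Real.sqrt (‖q‖ ^ 2 + m ^ 2)) / (4 * (‖q‖ ^ 2 + m ^ 2)) =
      (1 / (16 * Real.pi ^ 2)) *
        ∫ s in Set.Ici (2 * m), f s * Real.sqrt (1 - 4 * m ^ 2 / s ^ 2) := by
  set h : ℝ → ℝ := fun r => f (2 * Real.sqrt (r ^ 2 + m ^ 2)) / (4 * (r ^ 2 + m ^ 2)) with hh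
  set g : ℝ → ℝ := fun r => r ^ 2 * h r with hg
  set φ : ℝ → ℝ := fun s => Real.sqrt (s ^ 2 / 4 - m ^ 2) with hφ
  set φ' : ℝ → ℝ := fun s => s / (4 * Real.sqrt (s ^ 2 / 4 - m ^ 2)) with hφ'
  have hcontg : Continuous g := by
    apply continuous_pow 2 |>.mul
    apply Continuous.div (hf.comp (by continuity)) (by continuity)
    intro r; positivity
  -- g has compact support
  have hgsupp : HasCompactSupport g := by
    obtain ⟨R, hR⟩ := hsupp.isBounded.subset_closedBall 0
    apply HasCompactSupport.intro (isCompact_Icc : IsCompact (Icc (-(R+1)) (R+1)))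
    intro r hr
    have hr' : R + 1 < |r| := by
      simp only [Icc, mem_setOf_eq, not_and_or, not_le] at hr
      rcases abs_cases r with ⟨h1, _⟩ | ⟨h1, _⟩ <;> rcases hr with hr | hr <;> linarith
    have hfz : f (2 * Real.sqrt (r ^ 2 + m ^ 2)) = 0 := by
      apply image_eq_zero_of_notMem_tsupport
      intro hmem
      have := hR hmem
      simp only [Metric.mem_closedBall, dist_zero_right, Real.norm_eq_abs] at this
      have h1 : |r| ≤ Real.sqrt (r ^ 2 + m ^ 2) := by
        rw [← Real.sqrt_sq_eq_abs]
        exact Real.sqrt_le_sqrt (by nlinarith)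
      have h2 : (0:ℝ) ≤ Real.sqrt (r ^ 2 + m ^ 2) := Real.sqrt_nonneg _
      rw [abs_of_nonneg (by positivity : (0:ℝ) ≤ 2 * Real.sqrt (r ^ 2 + m ^ 2))] at this
      nlinarith [abs_nonneg r]
    simp [hg, hh, hfz]
  have hgint : Integrable g := hcontg.integrable_of_hasCompactSupport hgsupp
  -- spherical coordinates
  have hsph : (∫ q : EuclideanSpace ℝ (Fin 3),
      f (2 * Real.sqrt (‖q‖ ^ 2 + m ^ 2)) / (4 * (‖q‖ ^ 2 + m ^ 2)))
      = (4 * Real.pi) * ∫ r in Ioi (0:ℝ), g r := by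
    have := integral_fun_norm_addHaar (volume : Measure (EuclideanSpace ℝ (Fin 3))) h
    simp only [finrank_euclideanSpace, Fintype.card_fin, smul_eq_mul, nsmul_eq_mul] at this
    rw [show (∫ q : EuclideanSpace ℝ (Fin 3),
      f (2 * Real.sqrt (‖q‖ ^ 2 + m ^ 2)) / (4 * (‖q‖ ^ 2 + m ^ 2)))
        = ∫ q : EuclideanSpace ℝ (Fin 3), h ‖q‖ from rfl, this]
    have hball : (volume (Metric.ball (0 : EuclideanSpace ℝ (Fin 3)) 1)).toReal
        = 4 * Real.pi / 3 := by
      rw [EuclideanSpace.volume_ball]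
      simp only [Fintype.card_fin]
      have hG : Real.Gamma ((3:ℕ)/2 + 1) = 3/4 * Real.sqrt Real.pi := by
        push_cast
        rw [show (3:ℝ)/2 + 1 = (1/2 + 1) + 1 by norm_num, Real.Gamma_add_one (by norm_num),
          Real.Gamma_add_one (by norm_num), Real.Gamma_one_half_eq]
        ring
      rw [hG, ENNReal.toReal_mul, ENNReal.toReal_pow, ENNReal.toReal_ofReal (by norm_num),
        ENNReal.toReal_ofReal (by positivity)]
      have hs : Real.sqrt Real.pi ^ 3 = Real.pi * Real.sqrt Real.pi := by
        rw [pow_succ, Real.sq_sqrt Real.pi_pos.le]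
      rw [hs]
      have h0 : Real.sqrt Real.pi ≠ 0 := by positivity
      field_simp
    rw [measureReal_def, hball]
    ring
  -- pointwise identity on Ici (2m)
  have hpt : ∀ s ∈ Ici (2*m), (g ∘ φ) s * φ' s = f s * Real.sqrt (1 - 4*m^2/s^2) / 8 := by
    intro s hs
    have hs' : 2*m ≤ s := hs
    have hspos : 0 < s := by linarith
    have hnn : 0 ≤ s^2 - 4*m^2 := by nlinarith
    set t := Real.sqrt (s^2 - 4*m^2) with htd
    have ht0 : 0 ≤ t := Real.sqrt_nonneg _
    have ht2 : t^2 = s^2 - 4*m^2 := Real.sq_sqrt hnn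
    have h4 : Real.sqrt 4 = 2 := by
      rw [show (4:ℝ) = 2^2 by norm_num, Real.sqrt_sq (by norm_num)]
    have hφs : φ s = t / 2 := by
      show Real.sqrt (s^2/4 - m^2) = t/2
      rw [show s^2/4 - m^2 = (s^2-4*m^2)/4 by ring, Real.sqrt_div hnn, h4]
    have hrhs : Real.sqrt (1 - 4*m^2/s^2) = t / s := by
      rw [show 1 - 4*m^2/s^2 = (s^2-4*m^2)/s^2 by field_simp, Real.sqrt_div hnn,
        Real.sqrt_sq hspos.le]
    have hinner : (t/2)^2 + m^2 = s^2/4 := by rw [div_pow, ht2]; ring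
    have hsq : Real.sqrt (s^2/4) = s/2 := by
      rw [show s^2/4 = (s/2)^2 by ring, Real.sqrt_sq (by linarith)]
    show φ s ^ 2 * (f (2 * Real.sqrt (φ s ^ 2 + m ^ 2)) / (4 * (φ s ^ 2 + m ^ 2))) * φ' s
        = f s * Real.sqrt (1 - 4*m^2/s^2) / 8
    rw [hφs, hinner, hsq, hrhs, show 2 * (s/2) = s by ring]
    show (t/2)^2 * (f s / (4 * (s^2/4))) * (s / (4 * Real.sqrt (s^2/4 - m^2)))
        = f s * (t/s) / 8
    rw [show s^2/4 - m^2 = (s^2-4*m^2)/4 by ring, Real.sqrt_div hnn, h4, ← htd]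
    rcases eq_or_lt_of_le ht0 with ht | ht
    · rw [← ht]; simp
    · field_simp; ring
  -- integrability of the substituted function
  have hψint : IntegrableOn (fun s => f s * Real.sqrt (1 - 4*m^2/s^2) / 8) (Ici (2*m)) := by
    have hfi : Integrable f := hf.integrable_of_hasCompactSupport hsupp
    apply Integrable.mono ((hfi.div_const 8).restrict (s := Ici (2*m)))
    · have hmeas : Measurable fun s : ℝ => Real.sqrt (1 - 4*m^2/s^2) :=
        Real.continuous_sqrt.measurable.comp
          (measurable_const.sub (measurable_const.div (measurable_id.pow_const 2)))
      exact ((hf.measurable.mul hmeas).div_const 8).aestronglyMeasurable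
    · filter_upwards with s
      rw [Real.norm_eq_abs, Real.norm_eq_abs, abs_div, abs_div, abs_mul,
        show |(8:ℝ)| = 8 by norm_num]
      apply div_le_div_of_nonneg_right ?_ (by norm_num) |>.trans_eq rfl
      · apply mul_le_of_le_one_right (abs_nonneg _)
        rw [abs_of_nonneg (Real.sqrt_nonneg _)]
        calc Real.sqrt (1 - 4*m^2/s^2) ≤ Real.sqrt 1 := by
              apply Real.sqrt_le_sqrt
              have : 0 ≤ 4*m^2/s^2 := by positivity
              linarith
          _ = 1 := Real.sqrt_one
  have hsubint : IntegrableOn (fun s => (g ∘ φ) s * φ' s) (Ici (2*m)) :=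
    hψint.congr_fun (fun s hs => (hpt s hs).symm) measurableSet_Ici
  -- change of variables
  have key : (∫ r in Ioi (0:ℝ), g r) = ∫ s in Ioi (2*m), (g ∘ φ) s * φ' s := by
    have h20 : φ (2*m) = 0 := by
      show Real.sqrt ((2*m)^2/4 - m^2) = 0
      rw [show (2*m)^2/4 - m^2 = 0 by ring, Real.sqrt_zero]
    rw [← h20]
    symm
    apply integral_comp_mul_deriv_Ioi
    · exact (Real.continuous_sqrt.comp (by continuity)).continuousOn
    · refine Filter.tendsto_atTop_atTop.2 fun b => ⟨2*Real.sqrt ((max b 0)^2+m^2), fun a ha => ?_⟩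
      set c := max b 0 with hc
      have hc0 : 0 ≤ c := le_max_right _ _
      have h1 : c ≤ Real.sqrt (a^2/4 - m^2) := by
        rw [show c = Real.sqrt (c^2) from (Real.sqrt_sq hc0).symm]
        apply Real.sqrt_le_sqrt
        have h2 : 0 ≤ Real.sqrt (c^2+m^2) := Real.sqrt_nonneg _
        have h3 : (2*Real.sqrt (c^2+m^2))^2 = 4*(c^2+m^2) := by
          rw [mul_pow, Real.sq_sqrt (by positivity)]; ring
        nlinarith [sq_nonneg (a - 2*Real.sqrt (c^2+m^2))]
      exact le_trans (le_max_left b 0) h1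
    · intro s hs
      have hs' : 2*m < s := hs
      have hu : 0 < s^2/4 - m^2 := by nlinarith
      have hd : HasDerivAt φ (φ' s) s := by
        have h1 : HasDerivAt (fun s : ℝ => s^2/4 - m^2) (s/2) s := by
          have := ((hasDerivAt_pow 2 s).div_const 4).sub_const (m^2)
          refine this.congr_deriv ?_
          simp; ring
        have h2 := (Real.hasDerivAt_sqrt hu.ne').comp s h1
        refine h2.congr_deriv (Eq.symm ?_)
        show s / (4 * Real.sqrt (s^2/4 - m^2)) = 1 / (2 * Real.sqrt (s^2/4 - m^2)) * (s/2)
        have : Real.sqrt (s^2/4 - m^2) ≠ 0 := by positivity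
        field_simp; ring
      exact hd.hasDerivWithinAt
    · exact hcontg.continuousOn
    · exact hgint.integrableOn
    · exact hsubint
  rw [hsph, key, MeasureTheory.integral_Ici_eq_integral_Ioi,
    setIntegral_congr_fun measurableSet_Ioi
      (fun s hs => hpt s (Ioi_subset_Ici_self hs))]
  rw [show (fun s => f s * Real.sqrt (1 - 4*m^2/s^2) / 8)
      = fun s => (f s * Real.sqrt (1 - 4*m^2/s^2)) / 8 from rfl, integral_div]
  have hπ : Real.pi ≠ 0 := Real.pi_ne_zero
  field_simp
  ring
end

section
/- Let f : ℝ → ℝ, let x ∈ ℝ, ε > 0, α ∈ (0, 1] and C ≥ 0, and suppose that |f(u) − f(v)| ≤ C·|u − v|^α for all u, v ∈ [x − ε, x + ε]. Then the principal value integral exists: there is a real number L such that the integrals ∫_{[x−ε, x+ε] ∖ (x−η, x+η)} f(u)/(u − x) du converge to L as η → 0⁺. -/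
open MeasureTheory Set Real Filter

theorem stmt_15 (f : ℝ → ℝ) (x ε : ℝ) (hε : 0 < ε) (α : ℝ) (hα0 : 0 < α) (hα1 : α ≤ 1)
    (C : ℝ) (hC : 0 ≤ C)
    (hHolder : ∀ u ∈ Set.Icc (x - ε) (x + ε), ∀ v ∈ Set.Icc (x - ε) (x + ε),
      |f u - f v| ≤ C * |u - v| ^ α) :
    ∃ L : ℝ,
      Tendsto
        (fun η : ℝ =>
          ∫ u in {u : ℝ | x - ε ≤ u ∧ u ≤ x + ε ∧ η ≤ |u - x|}, f u / (u - x))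
        (nhdsWithin 0 (Set.Ioi 0)) (nhds L) := by
  have hxI : x ∈ Icc (x - ε) (x + ε) := ⟨by linarith, by linarith⟩
  set I : Set ℝ := Icc (x - ε) (x + ε) with hIdef
  have hImeas : MeasurableSet I := measurableSet_Icc
  -- continuity of f on I
  have hfc : ContinuousOn f I := by
    intro u hu
    rw [ContinuousWithinAt, tendsto_iff_dist_tendsto_zero]
    have h1 : Tendsto (fun v : ℝ => |v - u|) (nhdsWithin u I) (nhds 0) := by
      have h0 : Tendsto (fun v : ℝ => |v - u|) (nhds u) (nhds 0) := by
        have := ((continuous_sub_right u).abs.tendsto u)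
        simpa using this
      exact h0.mono_left nhdsWithin_le_nhds
    have h2 : ContinuousAt (fun t : ℝ => t ^ α) 0 :=
      Real.continuousAt_rpow_const 0 α (Or.inr hα0.le)
    have h3 := (h2.tendsto.comp h1).const_mul C
    rw [Real.zero_rpow hα0.ne', mul_zero] at h3
    refine squeeze_zero' (Eventually.of_forall fun v => dist_nonneg) ?_ h3
    filter_upwards [self_mem_nhdsWithin] with v hv
    rw [Real.dist_eq]
    exact hHolder v hv u hu
  set g : ℝ → ℝ := fun u => (f u - f x) / (u - x) with hgdef
  -- the dominating function is integrable on I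
  have hφint : IntegrableOn (fun u => C * |u - x| ^ (α - 1)) I := by
    apply Integrable.const_mul
    have hbase : IntervalIntegrable (fun t : ℝ => t ^ (α - 1)) volume 0 ε :=
      intervalIntegral.intervalIntegrable_rpow' (by linarith)
    have hr : IntegrableOn (fun u : ℝ => |u - x| ^ (α - 1)) (Icc x (x + ε)) := by
      have h1 := hbase.comp_sub_right x
      rw [zero_add, add_comm ε x] at h1
      have h2 : IntegrableOn (fun u : ℝ => (u - x) ^ (α - 1)) (Icc x (x + ε)) := by
        rw [integrableOn_Icc_iff_integrableOn_Ioc]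
        exact (intervalIntegrable_iff_integrableOn_Ioc_of_le (by linarith)).mp h1
      refine h2.congr_fun ?_ measurableSet_Icc
      intro u hu
      show (u - x) ^ (α - 1) = |u - x| ^ (α - 1)
      rw [abs_of_nonneg (sub_nonneg.mpr hu.1)]
    have hl : IntegrableOn (fun u : ℝ => |u - x| ^ (α - 1)) (Icc (x - ε) x) := by
      have h1 := hbase.comp_sub_left x
      rw [sub_zero] at h1
      have h2 : IntegrableOn (fun u : ℝ => (x - u) ^ (α - 1)) (Icc (x - ε) x) := by
        rw [integrableOn_Icc_iff_integrableOn_Ioc]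
        exact (intervalIntegrable_iff_integrableOn_Ioc_of_le (by linarith)).mp h1.symm
      refine h2.congr_fun ?_ measurableSet_Icc
      intro u hu
      show (x - u) ^ (α - 1) = |u - x| ^ (α - 1)
      rw [abs_of_nonpos (sub_nonpos.mpr hu.2), neg_sub]
    have := hl.union hr
    rwa [Icc_union_Icc_eq_Icc (by linarith) (by linarith)] at this
  -- g is integrable on I
  have hgI : IntegrableOn g I := by
    have hgc : ContinuousOn g (I \ {x}) := by
      apply ContinuousOn.div ((hfc.mono diff_subset).sub continuousOn_const)
        ((continuous_id.sub continuous_const).continuousOn)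
      intro u hu
      exact sub_ne_zero.mpr fun h => hu.2 (mem_singleton_iff.mpr h)
    have hdiff : (I \ {x} : Set ℝ) =ᵐ[volume] I := by
      rw [diff_ae_eq_self]
      exact measure_mono_null inter_subset_right Real.volume_singleton
    have haesm : AEStronglyMeasurable g (volume.restrict I) := by
      have := hgc.aestronglyMeasurable (μ := volume) (hImeas.diff (measurableSet_singleton x))
      rwa [Measure.restrict_congr_set hdiff] at this
    refine Integrable.mono' hφint haesm ?_
    rw [ae_restrict_iff' hImeas]
    refine Eventually.of_forall fun u hu => ?_
    by_cases hux : u = x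
    · subst hux
      simp only [hgdef, sub_self, div_zero, norm_zero]
      positivity
    · have habs : (0:ℝ) < |u - x| := abs_pos.mpr (sub_ne_zero.mpr hux)
      rw [hgdef, Real.norm_eq_abs, abs_div]
      calc |f u - f x| / |u - x| ≤ (C * |u - x| ^ α) / |u - x| := by
            gcongr
            exact hHolder u hu x hxI
        _ = C * |u - x| ^ (α - 1) := by
            rw [mul_div_assoc, Real.rpow_sub habs, Real.rpow_one]
  -- description of the sets
  have hSeq : ∀ η : ℝ, 0 < η →
      {u : ℝ | x - ε ≤ u ∧ u ≤ x + ε ∧ η ≤ |u - x|}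
        = Icc (x - ε) (x - η) ∪ Icc (x + η) (x + ε) := by
    intro η hη
    ext u
    simp only [mem_setOf_eq, mem_union, mem_Icc, le_abs, le_neg]
    constructor
    · rintro ⟨h1, h2, (h3 | h3)⟩
      · right; constructor <;> linarith
      · left; constructor <;> linarith
    · rintro (⟨h1, h2⟩ | ⟨h1, h2⟩)
      · exact ⟨h1, by linarith, Or.inr (by linarith)⟩
      · exact ⟨by linarith, h2, Or.inl (by linarith)⟩
  have hinvIcc : ∀ a b : ℝ, x ∉ Icc a b →
      IntegrableOn (fun u : ℝ => (u - x)⁻¹) (Icc a b) := by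
    intro a b hx'
    apply ContinuousOn.integrableOn_Icc
    apply ContinuousOn.inv₀ ((continuous_id.sub continuous_const).continuousOn)
    intro u hu h
    replace h : u = x := sub_eq_zero.mp h
    exact hx' (h ▸ hu)
  -- cancellation of the principal value of 1/(u-x)
  have hcancel : ∀ η : ℝ, η ∈ Ioo (0:ℝ) ε →
      ∫ u in {u : ℝ | x - ε ≤ u ∧ u ≤ x + ε ∧ η ≤ |u - x|}, (u - x)⁻¹ = 0 := by
    rintro η ⟨hη0, hηε⟩
    rw [hSeq η hη0]
    have hd : Disjoint (Icc (x - ε) (x - η)) (Icc (x + η) (x + ε)) := by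
      rw [Set.disjoint_left]
      intro u h1 h2
      rw [mem_Icc] at h1 h2
      linarith [h1.2, h2.1]
    have hint1 := hinvIcc (x - ε) (x - η) (by rw [mem_Icc]; push_neg; intro; linarith)
    have hint2 := hinvIcc (x + η) (x + ε) (by rw [mem_Icc]; push_neg; intro; linarith)
    rw [setIntegral_union hd measurableSet_Icc hint1 hint2]
    have e1 : ∫ u in Icc (x - ε) (x - η), (u - x)⁻¹ = Real.log (η / ε) := by
      rw [MeasureTheory.integral_Icc_eq_integral_Ioc,
        ← intervalIntegral.integral_of_le (by linarith)]
      rw [show (fun u : ℝ => (u - x)⁻¹) = (fun u : ℝ => (fun t : ℝ => t⁻¹) (u - x)) from rfl]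
      rw [intervalIntegral.integral_comp_sub_right (fun t : ℝ => t⁻¹) x]
      rw [show x - ε - x = -ε by ring, show x - η - x = -η by ring]
      rw [integral_inv (by
        intro h
        rw [Set.mem_uIcc] at h
        rcases h with ⟨h1, h2⟩ | ⟨h1, h2⟩ <;> linarith)]
      rw [neg_div_neg_eq]
    have e2 : ∫ u in Icc (x + η) (x + ε), (u - x)⁻¹ = Real.log (ε / η) := by
      rw [MeasureTheory.integral_Icc_eq_integral_Ioc,
        ← intervalIntegral.integral_of_le (by linarith)]
      rw [show (fun u : ℝ => (u - x)⁻¹) = (fun u : ℝ => (fun t : ℝ => t⁻¹) (u - x)) from rfl]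
      rw [intervalIntegral.integral_comp_sub_right (fun t : ℝ => t⁻¹) x]
      rw [show x + η - x = η by ring, show x + ε - x = ε by ring]
      rw [integral_inv (by
        intro h
        rw [Set.mem_uIcc] at h
        rcases h with ⟨h1, h2⟩ | ⟨h1, h2⟩ <;> linarith)]
    rw [e1, e2, show η / ε = (ε / η)⁻¹ by rw [inv_div], Real.log_inv]
    ring
  -- main limit via dominated convergence
  have hTmeas : ∀ η : ℝ, MeasurableSet {u : ℝ | η ≤ |u - x|} := fun η =>
    (isClosed_le continuous_const ((continuous_id.sub continuous_const).abs)).measurableSet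
  refine ⟨∫ u in I, g u, ?_⟩
  have key : Tendsto (fun η : ℝ =>
      ∫ u in {u : ℝ | x - ε ≤ u ∧ u ≤ x + ε ∧ η ≤ |u - x|}, g u)
      (nhdsWithin 0 (Ioi 0)) (nhds (∫ u in I, g u)) := by
    have hrepr : ∀ η : ℝ,
        (∫ u in {u : ℝ | x - ε ≤ u ∧ u ≤ x + ε ∧ η ≤ |u - x|}, g u)
          = ∫ u, ({u : ℝ | η ≤ |u - x|}.indicator g) u ∂(volume.restrict I) := by
      intro η
      have hset : {u : ℝ | η ≤ |u - x|} ∩ I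
          = {u : ℝ | x - ε ≤ u ∧ u ≤ x + ε ∧ η ≤ |u - x|} := by
        ext u
        simp only [mem_inter_iff, mem_setOf_eq, hIdef, mem_Icc]
        tauto
      rw [MeasureTheory.integral_indicator (hTmeas η),
        Measure.restrict_restrict (hTmeas η), hset]
    simp only [hrepr]
    apply tendsto_integral_filter_of_dominated_convergence (fun u => ‖g u‖)
    · exact Eventually.of_forall fun η => hgI.aestronglyMeasurable.indicator (hTmeas η)
    · exact Eventually.of_forall fun η =>
        Eventually.of_forall fun u => norm_indicator_le_norm_self g u
    · exact hgI.norm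
    · have hx0 : ∀ᵐ u ∂(volume.restrict I), u ≠ x := by
        refine ae_restrict_of_ae ?_
        rw [ae_iff]
        have : {u : ℝ | ¬u ≠ x} = {x} := by ext u; simp
        rw [this]
        exact Real.volume_singleton
      filter_upwards [hx0] with u hux
      have hpos : (0:ℝ) < |u - x| := abs_pos.mpr (sub_ne_zero.mpr hux)
      apply Tendsto.congr' ?_ (tendsto_const_nhds (x := g u))
      filter_upwards [mem_nhdsWithin_of_mem_nhds (Iio_mem_nhds hpos)] with η hη
      have hmem : u ∈ {u : ℝ | η ≤ |u - x|} := by rw [mem_setOf_eq]; exact (mem_Iio.mp hη).le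
      exact (indicator_of_mem hmem g).symm
  -- replace g by f u / (u - x) eventually
  apply Tendsto.congr' ?_ key
  filter_upwards [Ioo_mem_nhdsGT_of_mem (left_mem_Ico.mpr hε)] with η hη
  obtain ⟨hη0, hηε⟩ := hη
  have hSsub : {u : ℝ | x - ε ≤ u ∧ u ≤ x + ε ∧ η ≤ |u - x|} ⊆ I :=
    fun u hu => ⟨hu.1, hu.2.1⟩
  have hSmeas : MeasurableSet {u : ℝ | x - ε ≤ u ∧ u ≤ x + ε ∧ η ≤ |u - x|} := by
    rw [hSeq η hη0]
    exact measurableSet_Icc.union measurableSet_Icc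
  have hint2 : IntegrableOn (fun u : ℝ => f x * (u - x)⁻¹)
      {u : ℝ | x - ε ≤ u ∧ u ≤ x + ε ∧ η ≤ |u - x|} := by
    rw [hSeq η hη0]
    exact ((hinvIcc (x - ε) (x - η) (by rw [mem_Icc]; push_neg; intro; linarith)).union
      (hinvIcc (x + η) (x + ε) (by rw [mem_Icc]; push_neg; intro; linarith))).const_mul (f x)
  calc (∫ u in {u : ℝ | x - ε ≤ u ∧ u ≤ x + ε ∧ η ≤ |u - x|}, g u)
      = ∫ u in {u : ℝ | x - ε ≤ u ∧ u ≤ x + ε ∧ η ≤ |u - x|},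
          (f u / (u - x) - f x * (u - x)⁻¹) := by
        apply setIntegral_congr_fun hSmeas
        intro u hu
        have hux : u - x ≠ 0 := by
          refine sub_ne_zero.mpr fun h => ?_
          have := hu.2.2
          rw [h, sub_self, abs_zero] at this
          linarith
        show (f u - f x) / (u - x) = f u / (u - x) - f x * (u - x)⁻¹
        field_simp
    _ = (∫ u in {u : ℝ | x - ε ≤ u ∧ u ≤ x + ε ∧ η ≤ |u - x|}, f u / (u - x))
          - ∫ u in {u : ℝ | x - ε ≤ u ∧ u ≤ x + ε ∧ η ≤ |u - x|}, f x * (u - x)⁻¹ := by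
        apply integral_sub ?_ hint2
        have h1 : IntegrableOn g {u : ℝ | x - ε ≤ u ∧ u ≤ x + ε ∧ η ≤ |u - x|} :=
          hgI.mono_set hSsub
        have h2 : IntegrableOn (fun u : ℝ => g u + f x * (u - x)⁻¹)
            {u : ℝ | x - ε ≤ u ∧ u ≤ x + ε ∧ η ≤ |u - x|} := h1.add hint2
        refine h2.congr_fun ?_ hSmeas
        intro u hu
        have hux : u - x ≠ 0 := by
          refine sub_ne_zero.mpr fun h => ?_
          have := hu.2.2
          rw [h, sub_self, abs_zero] at this
          linarith
        show (f u - f x) / (u - x) + f x * (u - x)⁻¹ = f u / (u - x)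
        field_simp
        ring
    _ = ∫ u in {u : ℝ | x - ε ≤ u ∧ u ≤ x + ε ∧ η ≤ |u - x|}, f u / (u - x) := by
        rw [MeasureTheory.integral_const_mul, hcancel η ⟨hη0, hηε⟩, mul_zero, sub_zero]
end
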